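/- arXiv:1804.02622 — 4 statements merged into one kernel-verified Lean document; each statement's English description precedes it below -/
import Mathlib

section
/- Let α ∈ (0, 1/2) be a real number and let b : ℕ → ℕ satisfy b(N) ≥ 2 for all N and b(N)/√(log N) → 0 as N → ∞. Then there exists N₀ such that for every integer N ≥ N₀ the following holds: for every load balancing algorithm on the N-server state space with parameter b = b(N) that satisfies A₁(s) ≤ 1/√N for every state s ∈ 𝒮 with s₁ ≤ λ + k·log N/√N, and for every stationary distribution π of the associated Markov chain, one has E_π[ max{ Σ_{i=1}^{b} S_i − λ − k·log N/√N, 0 } ] ≤ 29·b/(√N · log N). -/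
open Filter

noncomputable section

/-- `λ = 1 - N^{-α}`. -/
def lam (α : ℝ) (N : ℕ) : ℝ := 1 - (N : ℝ) ^ (-α)

/-- `k = 1 + 1/(2(b-1))`. -/
def kcoef (b : ℕ) : ℝ := 1 + 1 / (2 * ((b : ℝ) - 1))

/-- The threshold `λ + k log N / √N`. -/
def thr (α : ℝ) (N b : ℕ) : ℝ := lam α N + kcoef b * Real.log N / Real.sqrt N

/-- Membership in the state space `𝒮`, encoded with the conventions `s 0 = 1` and
`s i = 0` for `i > b`; the actual coordinates are `s 1 ≥ ⋯ ≥ s b`. -/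
def IsState (N b : ℕ) (s : ℕ → ℝ) : Prop :=
  s 0 = 1 ∧ (∀ i, b < i → s i = 0) ∧ (∀ i, i ≤ b → s (i + 1) ≤ s i) ∧
    ∀ i, ∃ m : ℤ, (N : ℝ) * s i = (m : ℝ)

/-- The state space `𝒮`. -/
def State (N b : ℕ) : Type := {s : ℕ → ℝ // IsState N b s}

/-- The vector `e_i` whose `i`-th coordinate is `1/N` and whose other coordinates are `0`. -/
def evec (N i : ℕ) : ℕ → ℝ := fun j => if j = i then 1 / (N : ℝ) else 0

/-- A load balancing algorithm: routing probabilities `A_0 = 1 ≥ A_1 ≥ ⋯ ≥ A_b ≥ 0`,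
with `A_{i-1}(s) = A_i(s)` whenever `s_{i-1} = s_i`. -/
structure Algo (N b : ℕ) where
  A : ℕ → (ℕ → ℝ) → ℝ
  a_zero : ∀ s : State N b, A 0 s.val = 1
  a_mono : ∀ s : State N b, ∀ i, 1 ≤ i → i ≤ b → A i s.val ≤ A (i - 1) s.val
  a_nonneg : ∀ s : State N b, 0 ≤ A b s.val
  a_eq : ∀ s : State N b, ∀ i, 1 ≤ i → i ≤ b → s.val (i - 1) = s.val i →
    A (i - 1) s.val = A i s.val

/-- The generator `G` of the Markov chain. -/
def gen (N b : ℕ) (α : ℝ) (alg : Algo N b) (g : (ℕ → ℝ) → ℝ) (s : ℕ → ℝ) : ℝ :=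
  ∑ i ∈ Finset.Icc 1 b,
    (lam α N * (N : ℝ) * (alg.A (i - 1) s - alg.A i s) * (g (s + evec N i) - g s)
      + (N : ℝ) * (s i - s (i + 1)) * (g (s - evec N i) - g s))

/-- A stationary distribution of the chain. -/
def IsStationaryLB (N b : ℕ) (α : ℝ) (alg : Algo N b) (μ : State N b → ℝ) : Prop :=
  (∀ s, 0 ≤ μ s ∧ μ s ≤ 1) ∧ (∑' s : State N b, μ s) = 1 ∧
    ∀ g : (ℕ → ℝ) → ℝ, (∑' s : State N b, μ s * gen N b α alg g s.val) = 0

/-- The condition `A₁(s) ≤ 1/√N` whenever `s₁ ≤ λ + k log N/√N`. -/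
def GoodAlgo (N b : ℕ) (α : ℝ) (alg : Algo N b) : Prop :=
  ∀ s : State N b, s.val 1 ≤ thr α N b → alg.A 1 s.val ≤ 1 / Real.sqrt N

namespace LBAux

lemma sum_Icc_telescope (f : ℕ → ℝ) :
    ∀ b j : ℕ, j ≤ b + 1 → ∑ i ∈ Finset.Icc j b, (f i - f (i + 1)) = f j - f (b + 1) := by
  intro b
  induction b with
  | zero =>
    intro j hj
    interval_cases j
    · simp
    · simp
  | succ n ih =>
    intro j hj
    rcases Nat.lt_or_ge j (n + 2) with h | h
    · have hj' : j ≤ n + 1 := by omega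
      rw [Finset.sum_Icc_succ_top hj', ih j hj']
      ring
    · have hj2 : j = n + 2 := by omega
      subst hj2
      rw [Finset.Icc_eq_empty (by omega)]
      simp

lemma sum_Icc_telescope' (f : ℕ → ℝ) :
    ∀ b j : ℕ, 1 ≤ j → j ≤ b + 1 →
      ∑ i ∈ Finset.Icc j b, (f (i - 1) - f i) = f (j - 1) - f b := by
  intro b
  induction b with
  | zero =>
    intro j h1 h2
    have : j = 1 := by omega
    subst this
    simp
  | succ n ih =>
    intro j h1 h2
    rcases le_or_gt j (n + 1) with h | h
    · rw [Finset.sum_Icc_succ_top h, ih j h1 h]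
      have : n + 1 - 1 = n := by omega
      rw [this]
      ring
    · have hj2 : j = n + 2 := by omega
      subst hj2
      rw [Finset.Icc_eq_empty (by omega)]
      have : n + 2 - 1 = n + 1 := by omega
      rw [this]
      simp

section StateFacts

variable {N b : ℕ}

lemma state_antitone (s : State N b) : ∀ m : ℕ, ∀ i : ℕ, i + m ≤ b + 1 → s.val (i + m) ≤ s.val i := by
  intro m
  induction m with
  | zero => intro i _; simp
  | succ n ih =>
    intro i h
    have h1 : s.val (i + n + 1) ≤ s.val (i + n) := s.prop.2.2.1 (i + n) (by omega)
    have h2 : s.val (i + n) ≤ s.val i := ih i (by omega)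
    calc s.val (i + (n+1)) = s.val (i + n + 1) := by ring_nf
    _ ≤ s.val (i + n) := h1
    _ ≤ s.val i := h2

lemma state_le (s : State N b) {i j : ℕ} (hij : i ≤ j) (hj : j ≤ b + 1) :
    s.val j ≤ s.val i := by
  rcases Nat.exists_eq_add_of_le hij with ⟨m, rfl⟩
  exact state_antitone s m i hj

lemma state_nonneg (s : State N b) (i : ℕ) : 0 ≤ s.val i := by
  rcases le_or_gt i b with h | h
  · have h1 : s.val (b + 1) ≤ s.val i := state_le s (by omega) (le_refl _)
    have h2 : s.val (b + 1) = 0 := s.prop.2.1 _ (by omega)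
    linarith
  · rw [s.prop.2.1 i h]

lemma state_le_one (s : State N b) (i : ℕ) : s.val i ≤ 1 := by
  rcases le_or_gt i b with h | h
  · have h1 : s.val i ≤ s.val 0 := state_le s (by omega) (by omega)
    rw [s.prop.1] at h1
    exact h1
  · rw [s.prop.2.1 i h]; norm_num

open Fin.NatCast in
lemma state_finite (hN : 1 ≤ N) : Finite (State N b) := by
  have key : ∀ s : State N b, ∀ i : ℕ, (⌊(N : ℝ) * s.val i⌋ : ℝ) = (N : ℝ) * s.val i := by
    intro s i
    obtain ⟨m, hm⟩ := s.prop.2.2.2 i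
    rw [hm, Int.floor_intCast]
  apply Finite.of_injective (f := fun (s : State N b) (i : Fin (b + 1)) =>
    (⌊(N : ℝ) * s.val i⌋.toNat : Fin (N + 1)))
  intro s t hst
  have hval : ∀ i : ℕ, i ≤ b → s.val i = t.val i := by
    intro i hi
    have := congrFun hst ⟨i, by omega⟩
    simp only at this
    have hsb : ⌊(N : ℝ) * s.val i⌋.toNat < N + 1 := by
      have h1 : (N : ℝ) * s.val i ≤ N := by
        have := state_le_one s i
        nlinarith [(Nat.one_le_cast.mpr hN : (1:ℝ) ≤ N)]
      have h2 : (⌊(N : ℝ) * s.val i⌋ : ℝ) ≤ N := by rw [key s i]; exact h1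
      have h3 : ⌊(N : ℝ) * s.val i⌋ ≤ (N : ℤ) := by exact_mod_cast h2
      omega
    have htb : ⌊(N : ℝ) * t.val i⌋.toNat < N + 1 := by
      have h1 : (N : ℝ) * t.val i ≤ N := by
        have := state_le_one t i
        nlinarith [(Nat.one_le_cast.mpr hN : (1:ℝ) ≤ N)]
      have h2 : (⌊(N : ℝ) * t.val i⌋ : ℝ) ≤ N := by rw [key t i]; exact h1
      have h3 : ⌊(N : ℝ) * t.val i⌋ ≤ (N : ℤ) := by exact_mod_cast h2
      omega
    have heq : ⌊(N : ℝ) * s.val i⌋.toNat = ⌊(N : ℝ) * t.val i⌋.toNat := by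
      have h2 := congrArg Fin.val this
      rwa [Fin.val_cast_of_lt hsb, Fin.val_cast_of_lt htb] at h2
    have hs0 : 0 ≤ ⌊(N : ℝ) * s.val i⌋ := by
      apply Int.floor_nonneg.mpr
      have := state_nonneg s i
      positivity
    have ht0 : 0 ≤ ⌊(N : ℝ) * t.val i⌋ := by
      apply Int.floor_nonneg.mpr
      have := state_nonneg t i
      positivity
    have heq2 : ⌊(N : ℝ) * s.val i⌋ = ⌊(N : ℝ) * t.val i⌋ := by omega
    have : (N : ℝ) * s.val i = (N : ℝ) * t.val i := by
      rw [← key s i, ← key t i, heq2]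
    have hN' : (0:ℝ) < N := Nat.cast_pos.mpr hN
    exact mul_left_cancel₀ (ne_of_gt hN') this
  apply Subtype.ext
  funext i
  rcases le_or_gt i b with h | h
  · exact hval i h
  · rw [s.prop.2.1 i h, t.prop.2.1 i h]

end StateFacts

section Gen

lemma algo_chain {N b : ℕ} (alg : Algo N b) (s : State N b) :
    ∀ j, j ≤ b → ∀ i, i ≤ j → alg.A j s.val ≤ alg.A i s.val := by
  intro j
  induction j with
  | zero => intro _ i hi; have : i = 0 := by omega
            subst this; exact le_refl _
  | succ n ih =>
    intro hj i hi
    rcases Nat.lt_or_ge i (n+1) with h | h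
    · have h1 : alg.A (n+1) s.val ≤ alg.A n s.val := by
        have := alg.a_mono s (n+1) (by omega) hj
        simpa using this
      have h2 : alg.A n s.val ≤ alg.A i s.val := ih (by omega) i (by omega)
      linarith
    · have : i = n + 1 := by omega
      subst this
      exact le_refl _

lemma sum_add_evec (N b j i₀ : ℕ) (v : ℕ → ℝ) :
    ∑ x ∈ Finset.Icc j b, (v + evec N i₀) x
      = (∑ x ∈ Finset.Icc j b, v x) + (if i₀ ∈ Finset.Icc j b then 1/(N:ℝ) else 0) := by
  simp only [Pi.add_apply, Finset.sum_add_distrib, evec]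
  congr 1
  exact Finset.sum_ite_eq' _ _ _

lemma sum_sub_evec (N b j i₀ : ℕ) (v : ℕ → ℝ) :
    ∑ x ∈ Finset.Icc j b, (v - evec N i₀) x
      = (∑ x ∈ Finset.Icc j b, v x) - (if i₀ ∈ Finset.Icc j b then 1/(N:ℝ) else 0) := by
  simp only [Pi.sub_apply, Finset.sum_sub_distrib, evec]
  congr 1
  exact Finset.sum_ite_eq' _ _ _

lemma gen_comp (N b : ℕ) (α : ℝ) (alg : Algo N b) (φ ψ : ℝ → ℝ) (v : ℕ → ℝ) (hb : 1 ≤ b) :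
    gen N b α alg (fun w => φ (∑ i ∈ Finset.Icc 1 b, w i) + ψ (∑ i ∈ Finset.Icc 2 b, w i)) v =
      lam α N * N * (alg.A 0 v - alg.A b v)
          * (φ ((∑ i ∈ Finset.Icc 1 b, v i) + 1/N) - φ (∑ i ∈ Finset.Icc 1 b, v i))
      + N * (v 1 - v (b+1))
          * (φ ((∑ i ∈ Finset.Icc 1 b, v i) - 1/N) - φ (∑ i ∈ Finset.Icc 1 b, v i))
      + lam α N * N * (alg.A 1 v - alg.A b v)
          * (ψ ((∑ i ∈ Finset.Icc 2 b, v i) + 1/N) - ψ (∑ i ∈ Finset.Icc 2 b, v i))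
      + N * (v 2 - v (b+1))
          * (ψ ((∑ i ∈ Finset.Icc 2 b, v i) - 1/N) - ψ (∑ i ∈ Finset.Icc 2 b, v i)) := by
  classical
  unfold gen
  have step1 : ∀ i₀ ∈ Finset.Icc 1 b,
      (lam α N * (N : ℝ) * (alg.A (i₀ - 1) v - alg.A i₀ v) *
          ((fun w => φ (∑ i ∈ Finset.Icc 1 b, w i) + ψ (∑ i ∈ Finset.Icc 2 b, w i)) (v + evec N i₀)
            - (fun w => φ (∑ i ∈ Finset.Icc 1 b, w i) + ψ (∑ i ∈ Finset.Icc 2 b, w i)) v)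
        + (N : ℝ) * (v i₀ - v (i₀ + 1)) *
          ((fun w => φ (∑ i ∈ Finset.Icc 1 b, w i) + ψ (∑ i ∈ Finset.Icc 2 b, w i)) (v - evec N i₀)
            - (fun w => φ (∑ i ∈ Finset.Icc 1 b, w i) + ψ (∑ i ∈ Finset.Icc 2 b, w i)) v))
      = (lam α N * (N : ℝ) * (alg.A (i₀ - 1) v - alg.A i₀ v) *
            (φ ((∑ i ∈ Finset.Icc 1 b, v i) + 1/N) - φ (∑ i ∈ Finset.Icc 1 b, v i))
        + (N : ℝ) * (v i₀ - v (i₀ + 1)) *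
            (φ ((∑ i ∈ Finset.Icc 1 b, v i) - 1/N) - φ (∑ i ∈ Finset.Icc 1 b, v i)))
        + ((if i₀ ∈ Finset.Icc 2 b then lam α N * (N : ℝ) * (alg.A (i₀ - 1) v - alg.A i₀ v) *
            (ψ ((∑ i ∈ Finset.Icc 2 b, v i) + 1/N) - ψ (∑ i ∈ Finset.Icc 2 b, v i)) else 0)
        + (if i₀ ∈ Finset.Icc 2 b then (N : ℝ) * (v i₀ - v (i₀ + 1)) *
            (ψ ((∑ i ∈ Finset.Icc 2 b, v i) - 1/N) - ψ (∑ i ∈ Finset.Icc 2 b, v i)) else 0)) := by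
    intro i₀ hi₀
    simp only []
    rw [sum_add_evec N b 1 i₀ v, sum_add_evec N b 2 i₀ v,
      sum_sub_evec N b 1 i₀ v, sum_sub_evec N b 2 i₀ v, if_pos hi₀]
    by_cases h2 : i₀ ∈ Finset.Icc 2 b
    · rw [if_pos h2, if_pos h2, if_pos h2]
      ring
    · rw [if_neg h2, if_neg h2, if_neg h2]
      simp only [add_zero, sub_zero]
      ring
  rw [Finset.sum_congr rfl step1]
  rw [Finset.sum_add_distrib, Finset.sum_add_distrib, Finset.sum_add_distrib]
  have hinter : Finset.Icc 1 b ∩ Finset.Icc 2 b = Finset.Icc 2 b := by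
    ext x
    simp only [Finset.mem_inter, Finset.mem_Icc]
    omega
  rw [Finset.sum_ite_mem, Finset.sum_ite_mem, hinter]
  have tele1 : ∑ i ∈ Finset.Icc 1 b, (lam α N * (N : ℝ) * (alg.A (i - 1) v - alg.A i v) *
      (φ ((∑ i ∈ Finset.Icc 1 b, v i) + 1/N) - φ (∑ i ∈ Finset.Icc 1 b, v i)))
      = lam α N * N * (alg.A 0 v - alg.A b v)
          * (φ ((∑ i ∈ Finset.Icc 1 b, v i) + 1/N) - φ (∑ i ∈ Finset.Icc 1 b, v i)) := by
    rw [← Finset.sum_mul]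
    congr 1
    have : ∀ i ∈ Finset.Icc 1 b, lam α N * (N : ℝ) * (alg.A (i - 1) v - alg.A i v)
        = lam α N * (N : ℝ) * ((fun j => alg.A j v) (i-1) - (fun j => alg.A j v) i) := by
      intro i _; rfl
    rw [Finset.sum_congr rfl this, ← Finset.mul_sum,
      sum_Icc_telescope' (fun j => alg.A j v) b 1 (le_refl _) (by omega)]
  have tele2 : ∑ i ∈ Finset.Icc 1 b, ((N : ℝ) * (v i - v (i + 1)) *
      (φ ((∑ i ∈ Finset.Icc 1 b, v i) - 1/N) - φ (∑ i ∈ Finset.Icc 1 b, v i)))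
      = N * (v 1 - v (b+1))
          * (φ ((∑ i ∈ Finset.Icc 1 b, v i) - 1/N) - φ (∑ i ∈ Finset.Icc 1 b, v i)) := by
    rw [← Finset.sum_mul]
    congr 1
    rw [← Finset.mul_sum, sum_Icc_telescope v b 1 (by omega)]
  have tele3 : ∑ i ∈ Finset.Icc 2 b, (lam α N * (N : ℝ) * (alg.A (i - 1) v - alg.A i v) *
      (ψ ((∑ i ∈ Finset.Icc 2 b, v i) + 1/N) - ψ (∑ i ∈ Finset.Icc 2 b, v i)))
      = lam α N * N * (alg.A 1 v - alg.A b v)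
          * (ψ ((∑ i ∈ Finset.Icc 2 b, v i) + 1/N) - ψ (∑ i ∈ Finset.Icc 2 b, v i)) := by
    rw [← Finset.sum_mul]
    congr 1
    have : ∀ i ∈ Finset.Icc 2 b, lam α N * (N : ℝ) * (alg.A (i - 1) v - alg.A i v)
        = lam α N * (N : ℝ) * ((fun j => alg.A j v) (i-1) - (fun j => alg.A j v) i) := by
      intro i _; rfl
    rw [Finset.sum_congr rfl this, ← Finset.mul_sum,
      sum_Icc_telescope' (fun j => alg.A j v) b 2 (by omega) (by omega)]
  have tele4 : ∑ i ∈ Finset.Icc 2 b, ((N : ℝ) * (v i - v (i + 1)) *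
      (ψ ((∑ i ∈ Finset.Icc 2 b, v i) - 1/N) - ψ (∑ i ∈ Finset.Icc 2 b, v i)))
      = N * (v 2 - v (b+1))
          * (ψ ((∑ i ∈ Finset.Icc 2 b, v i) - 1/N) - ψ (∑ i ∈ Finset.Icc 2 b, v i)) := by
    rw [← Finset.sum_mul]
    congr 1
    rw [← Finset.mul_sum, sum_Icc_telescope v b 2 (by omega)]
  rw [tele1, tele2, tele3, tele4]
  ring

end Gen

section RealLemmas

lemma quad_up {x Q d : ℝ} (hd : 0 ≤ d) :
    (max (x + d - Q) 0)^2 - (max (x - Q) 0)^2 ≤ 2*d*(max (x - Q) 0) + d^2 := by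
  have hy0 : 0 ≤ max (x - Q) 0 := le_max_right _ _
  have h1 : max (x + d - Q) 0 ≤ max (x - Q) 0 + d := by
    apply max_le
    · have := le_max_left (x - Q) 0; linarith
    · linarith
  have h2 : (max (x + d - Q) 0)^2 ≤ (max (x - Q) 0 + d)^2 := by
    apply pow_le_pow_left₀ (le_max_right _ _) h1
  nlinarith

lemma quad_down {x Q d : ℝ} (hd : 0 ≤ d) :
    (max (x - d - Q) 0)^2 - (max (x - Q) 0)^2 ≤ -(2*d*(max (x - Q) 0)) + d^2 := by
  rcases le_or_gt (x - Q) d with h | h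
  · have h1 : max (x - d - Q) 0 = 0 := by
      apply max_eq_right; linarith
    rw [h1]
    rcases le_or_gt (x - Q) 0 with h2 | h2
    · have : max (x - Q) 0 = 0 := max_eq_right h2
      rw [this]; nlinarith
    · have : max (x - Q) 0 = x - Q := max_eq_left (le_of_lt h2)
      rw [this]; nlinarith
  · have h1 : max (x - d - Q) 0 = x - Q - d := by
      rw [show x - d - Q = x - Q - d by ring]
      apply max_eq_left; linarith
    have h2 : max (x - Q) 0 = x - Q := by
      apply max_eq_left; linarith
    rw [h1, h2]; nlinarith

lemma exp_beta_le {θ : ℝ} (h0 : 0 ≤ θ) (h1 : θ ≤ 1/2) : Real.exp θ - 1 ≤ 2*θ := by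
  have key : (1 - θ) * Real.exp θ ≤ 1 := by
    have h2 : 1 - θ ≤ Real.exp (-θ) := by
      have := Real.add_one_le_exp (-θ); linarith
    have h3 : Real.exp (-θ) * Real.exp θ = 1 := by
      rw [← Real.exp_add]; simp
    nlinarith [Real.exp_pos θ]
  nlinarith [Real.exp_pos θ]

lemma exp_gamma_ge {θ : ℝ} (h0 : 0 ≤ θ) (h1 : θ ≤ 1) : θ/2 ≤ 1 - Real.exp (-θ) := by
  have key : (1 + θ) * Real.exp (-θ) ≤ 1 := by
    have h2 : 1 + θ ≤ Real.exp θ := by have := Real.add_one_le_exp θ; linarith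
    have h3 : Real.exp (-θ) * Real.exp θ = 1 := by
      rw [← Real.exp_add]; simp
    nlinarith [Real.exp_pos (-θ)]
  nlinarith [Real.exp_pos (-θ)]

lemma exp_gamma_le (θ : ℝ) : 1 - Real.exp (-θ) ≤ θ := by
  have := Real.add_one_le_exp (-θ); linarith

lemma beta_sub_gamma (θ : ℝ) :
    (Real.exp θ - 1) - (1 - Real.exp (-θ)) = (Real.exp θ - 1) * (1 - Real.exp (-θ)) := by
  have h3 : Real.exp θ * Real.exp (-θ) = 1 := by
    rw [← Real.exp_add]; simp
  nlinarith

end RealLemmas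

section KeyIneq

set_option maxHeartbeats 1000000 in
lemma key_ineq
    (n R L bR lamv q M Q θ β γ δ c dd K2 K1 U1 U2 s1 s2 x2 : ℝ)
    (hn : R * R = n) (hR : 0 < R) (hL100 : 100 ≤ L) (hLR : L ≤ R)
    (hb2 : 2 ≤ bR)
    (hlam0 : 0 ≤ lamv) (hlam1 : lamv ≤ 1)
    (hq : q = lamv + L/R) (hQ : Q = q + M) (hM0 : 0 < M)
    (hθ : θ = L/(8*R)) (hβ : β = Real.exp θ - 1) (hγ : γ = 1 - Real.exp (-θ))
    (hδ : δ = 1/n) (hc : c = θ*n) (hdd : dd = n*M/(2*(bR-1)))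
    (hβ2 : β ≤ 2*θ) (hγ1 : θ/2 ≤ γ)
    (hK20 : 0 < K2) (hK10 : 0 < K1)
    (hP4 : n*(lamv*β - q*γ) ≤ -(L^2/32))
    (hP5 : β*R ≤ γ*dd/2)
    (hPA1 : 4*bR ≤ K2 * (γ*dd/4) * Real.exp (c*M))
    (hPA2 : K1 * (R*L/4) * Real.exp (c*q) ≤ K2*γ*dd/4)
    (hPA3 : K1 * (R*L/4) * Real.exp (c*(q+M/2)) ≤ 28*bR*δ)
    (hK2eq : K2*β*R*Real.exp (c*(M/2)) = 28*bR*δ)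
    (hK1eq : K1*(L^2/32)*Real.exp (c*Q) = 2*K2*β*n)
    (hU10 : 0 ≤ U1) (hU11 : U1 ≤ lamv * n)
    (hU21 : U2 ≤ lamv * n) (hU2R : s1 ≤ Q → U2 ≤ R)
    (hs20 : 0 ≤ s2) (hs21 : s2 ≤ s1) (hs11 : s1 ≤ 1)
    (hx20 : 0 ≤ x2) (hx2b : x2 ≤ (bR - 1) * s2) :
    U1 * (((max (s1+x2+δ - Q) 0)^2 + K1*Real.exp (c*(s1+x2+δ)))
        - ((max (s1+x2 - Q) 0)^2 + K1*Real.exp (c*(s1+x2))))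
    + n*s1 * (((max (s1+x2-δ - Q) 0)^2 + K1*Real.exp (c*(s1+x2-δ)))
        - ((max (s1+x2 - Q) 0)^2 + K1*Real.exp (c*(s1+x2))))
    + U2 * (K2*Real.exp (c*(x2+δ)) - K2*Real.exp (c*x2))
    + n*s2 * (K2*Real.exp (c*(x2-δ)) - K2*Real.exp (c*x2))
    ≤ -(2*δ*R*L) * max (s1+x2 - Q) 0 + 58*bR*δ := by
  have hn0 : (0:ℝ) < n := hn ▸ mul_pos hR hR
  have hδ0 : (0:ℝ) < δ := by rw [hδ]; positivity
  have hL0 : (0:ℝ) < L := by linarith only [hL100]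
  have hθ0 : (0:ℝ) < θ := by rw [hθ]; positivity
  have hβ0 : (0:ℝ) < β := by
    rw [hβ]; linarith only [Real.add_one_le_exp θ, hθ0]
  have hγ0 : (0:ℝ) < γ := by linarith only [hγ1, hθ0]
  have hc0 : (0:ℝ) < c := by rw [hc]; exact mul_pos hθ0 hn0
  have hB1 : (1:ℝ) ≤ bR - 1 := by linarith only [hb2]
  have hdd0 : (0:ℝ) < dd := by
    rw [hdd]; exact div_pos (mul_pos hn0 hM0) (by linarith only [hb2])
  have hRL_n : R * L ≤ n := by
    rw [← hn]; exact mul_le_mul_of_nonneg_left hLR (le_of_lt hR)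
  have hs10 : (0:ℝ) ≤ s1 := le_trans hs20 hs21
  have hns1 : (0:ℝ) ≤ n * s1 := mul_nonneg hn0.le hs10
  have hns2 : (0:ℝ) ≤ n * s2 := mul_nonneg hn0.le hs20
  -- exponential manipulations
  have hcδ : c * δ = θ := by
    rw [hc, hδ]; field_simp
  have expup : ∀ x : ℝ, Real.exp (c*(x+δ)) = Real.exp (c*x) * Real.exp θ := by
    intro x
    rw [← Real.exp_add, ← hcδ]; ring_nf
  have expdn : ∀ x : ℝ, Real.exp (c*(x-δ)) = Real.exp (c*x) * Real.exp (-θ) := by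
    intro x
    rw [← Real.exp_add, ← hcδ]; ring_nf
  set y := max (s1+x2 - Q) 0 with hy
  have hy0 : 0 ≤ y := le_max_right _ _
  set X1 := Real.exp (c*(s1+x2)) with hX1
  set X2 := Real.exp (c*x2) with hX2
  have hX10 : 0 < X1 := Real.exp_pos _
  have hX20 : 0 < X2 := Real.exp_pos _
  have hX1X2 : X1 = Real.exp (c*s1) * X2 := by
    rw [hX1, hX2, ← Real.exp_add]; ring_nf
  -- decompose LHS
  have decomp :
      U1 * (((max (s1+x2+δ - Q) 0)^2 + K1*Real.exp (c*(s1+x2+δ)))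
        - ((max (s1+x2 - Q) 0)^2 + K1*Real.exp (c*(s1+x2))))
      + n*s1 * (((max (s1+x2-δ - Q) 0)^2 + K1*Real.exp (c*(s1+x2-δ)))
        - ((max (s1+x2 - Q) 0)^2 + K1*Real.exp (c*(s1+x2))))
      + U2 * (K2*Real.exp (c*(x2+δ)) - K2*Real.exp (c*x2))
      + n*s2 * (K2*Real.exp (c*(x2-δ)) - K2*Real.exp (c*x2))
      = (U1 * ((max (s1+x2+δ - Q) 0)^2 - y^2) + n*s1 * ((max (s1+x2-δ - Q) 0)^2 - y^2))
        + K1*X1*(U1*β - n*s1*γ) + K2*X2*(U2*β - n*s2*γ) := by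
    rw [expup (s1+x2), expdn (s1+x2), expup x2, expdn x2, hβ, hγ]
    simp only [hy, hX1, hX2]
    ring
  rw [decomp]
  -- quadratic part
  have hq1 : U1 * ((max (s1+x2+δ - Q) 0)^2 - y^2) ≤ U1 * (2*δ*y + δ^2) := by
    apply mul_le_mul_of_nonneg_left _ hU10
    simpa using quad_up (x := s1+x2) (Q := Q) (le_of_lt hδ0)
  have hq2 : n*s1 * ((max (s1+x2-δ - Q) 0)^2 - y^2) ≤ n*s1 * (-(2*δ*y) + δ^2) := by
    apply mul_le_mul_of_nonneg_left _ hns1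
    simpa using quad_down (x := s1+x2) (Q := Q) (le_of_lt hδ0)
  have hδ2 : U1 * δ^2 + n*s1*δ^2 ≤ 2*δ := by
    have e1 : lamv * n ≤ n := mul_le_of_le_one_left hn0.le hlam1
    have e2 : n * s1 ≤ n := mul_le_of_le_one_right hn0.le hs11
    have h1 : U1 + n*s1 ≤ 2*n := by linarith only [hU11, e1, e2]
    have h3 : (U1 + n*s1)*δ^2 ≤ (2*n)*δ^2 := mul_le_mul_of_nonneg_right h1 (sq_nonneg δ)
    have h4 : (2*n)*δ^2 = 2*δ := by rw [hδ]; field_simp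
    nlinarith only [h3, h4]
  have quadpart : U1 * ((max (s1+x2+δ - Q) 0)^2 - y^2) + n*s1 * ((max (s1+x2-δ - Q) 0)^2 - y^2)
      ≤ 2*δ*y*(U1 - n*s1) + 2*δ := by
    have e1 : U1 * (2*δ*y + δ^2) + n*s1 * (-(2*δ*y) + δ^2)
        = 2*δ*y*(U1 - n*s1) + (U1 * δ^2 + n*s1*δ^2) := by ring
    have := add_le_add hq1 hq2
    linarith only [e1, hδ2, this]
  have h2b : 2*δ ≤ 2*bR*δ := by nlinarith only [hb2, hδ0]
  have hbδ : (0:ℝ) ≤ bR*δ := by nlinarith only [hb2, hδ0]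
  have hlamn : lamv * n ≤ n := mul_le_of_le_one_left hn0.le hlam1
  have h2δy : 0 ≤ 2*δ*y := mul_nonneg (by positivity) hy0
  have hX2exp : ∀ w : ℝ, x2 ≤ w → X2 ≤ Real.exp (c*w) := by
    intro w hw
    rw [hX2]
    exact Real.exp_le_exp.mpr (mul_le_mul_of_nonneg_left hw hc0.le)
  have hX2exp' : ∀ w : ℝ, w ≤ x2 → Real.exp (c*w) ≤ X2 := by
    intro w hw
    rw [hX2]
    exact Real.exp_le_exp.mpr (mul_le_mul_of_nonneg_left hw hc0.le)
  -- K2-term bounds (valid when U2 ≤ R)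
  have hK2small : U2 ≤ R → x2 ≤ M/2 → K2*X2*(U2*β - n*s2*γ) ≤ 28*bR*δ := by
    intro hU2 hx2M
    have t0 : 0 ≤ n*s2*γ := mul_nonneg hns2 hγ0.le
    have t1 : U2*β - n*s2*γ ≤ R*β := by
      have := mul_le_mul_of_nonneg_right hU2 hβ0.le
      linarith only [this, t0]
    have t2 : X2 ≤ Real.exp (c*(M/2)) := hX2exp _ hx2M
    calc K2*X2*(U2*β - n*s2*γ) ≤ K2*X2*(R*β) :=
          mul_le_mul_of_nonneg_left t1 (by positivity)
    _ ≤ K2*Real.exp (c*(M/2))*(R*β) := by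
        have h := mul_le_mul_of_nonneg_right (mul_le_mul_of_nonneg_left t2 hK20.le)
          (show (0:ℝ) ≤ R*β by positivity)
        linarith only [h]
    _ = K2*β*R*Real.exp (c*(M/2)) := by ring
    _ = 28*bR*δ := hK2eq
  have hs2dd : M/2 < x2 → dd ≤ n*s2 := by
    intro hx2M
    rw [hdd, div_le_iff₀ (by linarith only [hb2] : (0:ℝ) < 2*(bR-1))]
    nlinarith only [hx2M, hx2b, hn0]
  have hK2neg : U2 ≤ R → M/2 < x2 → K2*X2*(U2*β - n*s2*γ) ≤ -(K2*(γ*dd/2)*X2) := by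
    intro hU2 hx2M
    have hdd2 := hs2dd hx2M
    have t1 : U2*β - n*s2*γ ≤ -(γ*dd/2) := by
      have g1 : U2*β ≤ R*β := mul_le_mul_of_nonneg_right hU2 hβ0.le
      have g2 : γ*dd ≤ γ*(n*s2) := mul_le_mul_of_nonneg_left hdd2 hγ0.le
      have e : γ*(n*s2) = n*s2*γ := by ring
      linarith only [g1, g2, hP5, e]
    calc K2*X2*(U2*β - n*s2*γ) ≤ K2*X2*(-(γ*dd/2)) :=
          mul_le_mul_of_nonneg_left t1 (by positivity)
    _ = -(K2*(γ*dd/2)*X2) := by ring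
  rcases le_or_gt q s1 with hcase | hcase
  · -- Case A : q ≤ s1
    have ha : n*q ≤ n*s1 := mul_le_mul_of_nonneg_left hcase hn0.le
    have e6 : n*q = n*lamv + R*L := by
      rw [hq, ← hn]; field_simp
    have hA1 : 2*δ*y*(U1 - n*s1) ≤ -(2*δ*R*L)*y := by
      have d1 : U1 - n*s1 ≤ -(R*L) := by linarith only [hU11, ha, e6]
      have := mul_le_mul_of_nonneg_left d1 h2δy
      have e7 : 2*δ*y*(-(R*L)) = -(2*δ*R*L)*y := by ring
      linarith only [this, e7]
    have hA2 : K1*X1*(U1*β - n*s1*γ) ≤ K1*X1*(-(L^2/32)) := by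
      apply mul_le_mul_of_nonneg_left _ (by positivity)
      have g1 : U1*β ≤ lamv*n*β := mul_le_mul_of_nonneg_right hU11 hβ0.le
      have g2 : n*q*γ ≤ n*s1*γ := mul_le_mul_of_nonneg_right ha hγ0.le
      have e : n*(lamv*β - q*γ) = lamv*n*β - n*q*γ := by ring
      linarith only [g1, g2, hP4, e]
    rcases le_or_gt s1 Q with hsQ | hsQ
    · -- s1 ≤ Q
      have hU2R' := hU2R hsQ
      have hK1term : K1*X1*(U1*β - n*s1*γ) ≤ 0 := by
        have : K1*X1*(-(L^2/32)) ≤ 0 := by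
          have : 0 ≤ K1*X1*(L^2/32) := by positivity
          linarith only [this]
        linarith only [hA2, this]
      have hK2term : K2*X2*(U2*β - n*s2*γ) ≤ 28*bR*δ := by
        rcases le_or_gt x2 (M/2) with hx2M | hx2M
        · exact hK2small hU2R' hx2M
        · have h := hK2neg hU2R' hx2M
          have h2 : 0 ≤ K2*(γ*dd/2)*X2 := by positivity
          have h3 : (0:ℝ) ≤ 28*bR*δ := by positivity
          linarith only [h, h2, h3]
      linarith only [quadpart, hA1, hK1term, hK2term, h2b, hbδ]
    · -- Q < s1
      have hK2term : K2*X2*(U2*β - n*s2*γ) ≤ K2*β*n*X2 := by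
        have g1 : U2*β ≤ lamv*n*β := mul_le_mul_of_nonneg_right hU21 hβ0.le
        have g2 : lamv*n*β ≤ n*β := mul_le_mul_of_nonneg_right hlamn hβ0.le
        have g3 : 0 ≤ n*s2*γ := mul_nonneg hns2 hγ0.le
        have g4 : U2*β - n*s2*γ ≤ n*β := by linarith only [g1, g2, g3]
        calc K2*X2*(U2*β - n*s2*γ) ≤ K2*X2*(n*β) :=
              mul_le_mul_of_nonneg_left g4 (by positivity)
        _ = K2*β*n*X2 := by ring
      have hK1term : K1*X1*(U1*β - n*s1*γ) ≤ -(K2*β*n*X2) := by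
        have hX1ge : Real.exp (c*Q)*X2 ≤ X1 := by
          rw [hX1X2]
          apply mul_le_mul_of_nonneg_right _ hX20.le
          exact Real.exp_le_exp.mpr (mul_le_mul_of_nonneg_left hsQ.le hc0.le)
        have t : K1*(L^2/32)*(Real.exp (c*Q)*X2) ≤ K1*(L^2/32)*X1 :=
          mul_le_mul_of_nonneg_left hX1ge (by positivity)
        have t2 : K1*(L^2/32)*(Real.exp (c*Q)*X2) = 2*K2*β*n*X2 := by
          rw [← mul_assoc, hK1eq]
        have t3 : K1*X1*(-(L^2/32)) = -(K1*(L^2/32)*X1) := by ring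
        have t4 : (0:ℝ) ≤ K2*β*n*X2 := by positivity
        linarith only [hA2, t, t2, t3, t4]
      have h58 : 2*bR*δ ≤ 58*bR*δ := by nlinarith only [hδ0, hb2]
      linarith only [quadpart, hA1, hK1term, hK2term, h2b, h58, hbδ]
  · -- Case B : s1 < q
    have hsQ : s1 ≤ Q := by
      rw [hQ]; linarith only [hcase, hM0]
    have hU2R' := hU2R hsQ
    set z := max (x2 - M) 0 with hz
    have hz0 : 0 ≤ z := le_max_right _ _
    have hyz : y ≤ z := by
      rw [hy, hz]
      apply max_le_max _ (le_refl 0)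
      rw [hQ]; linarith only [hcase]
    have hzb : z ≤ bR := by
      apply max_le _ (by linarith only [hb2])
      have hs2one : s2 ≤ 1 := le_trans hs21 hs11
      nlinarith only [hx2b, hM0, hB1, hs2one, hs20]
    have hquad2 : 2*δ*y*(U1 - n*s1) ≤ -(2*δ*R*L)*y + 4*δ*n*z := by
      have d1 : U1 - n*s1 + R*L ≤ 2*n := by linarith only [hU11, hlamn, hns1, hRL_n]
      have d2 : 2*δ*y*(U1-n*s1+R*L) ≤ 2*δ*y*(2*n) := mul_le_mul_of_nonneg_left d1 h2δy
      have d3 : 2*δ*y*(2*n) ≤ 2*δ*z*(2*n) := by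
        have : 0 ≤ 2*δ*(2*n) := by positivity
        nlinarith only [hyz, this, hδ0, hn0]
      have e4 : 2*δ*y*(U1-n*s1+R*L) = 2*δ*y*(U1-n*s1) + (2*δ*R*L)*y := by ring
      have e5 : 2*δ*z*(2*n) = 4*δ*n*z := by ring
      linarith only [d2, d3, e4, e5]
    have e6 : 2*θ*n = R*L/4 := by
      rw [hθ, ← hn]; field_simp; ring
    have hK1B : K1*X1*(U1*β - n*s1*γ) ≤ K1*(R*L/4)*Real.exp (c*q)*X2 := by
      have g0 : U1 ≤ n := le_trans hU11 hlamn
      have g1 : U1*β ≤ n*β := mul_le_mul_of_nonneg_right g0 hβ0.le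
      have g2 : n*β ≤ n*(2*θ) := mul_le_mul_of_nonneg_left hβ2 hn0.le
      have g3 : 0 ≤ n*s1*γ := mul_nonneg hns1 hγ0.le
      have g4 : U1*β - n*s1*γ ≤ R*L/4 := by
        have e7 : n*(2*θ) = 2*θ*n := by ring
        linarith only [g1, g2, g3, e6, e7]
      have hX1le : X1 ≤ Real.exp (c*q)*X2 := by
        rw [hX1X2]
        apply mul_le_mul_of_nonneg_right _ hX20.le
        exact Real.exp_le_exp.mpr (mul_le_mul_of_nonneg_left hcase.le hc0.le)
      calc K1*X1*(U1*β - n*s1*γ) ≤ K1*X1*(R*L/4) :=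
            mul_le_mul_of_nonneg_left g4 (by positivity)
      _ ≤ K1*(Real.exp (c*q)*X2)*(R*L/4) := by
          apply mul_le_mul_of_nonneg_right _ (by positivity : (0:ℝ) ≤ R*L/4)
          exact mul_le_mul_of_nonneg_left hX1le hK10.le
      _ = K1*(R*L/4)*Real.exp (c*q)*X2 := by ring
    rcases le_or_gt x2 (M/2) with hx2M | hx2M
    · -- B1
      have hz00 : z = 0 := by
        rw [hz]; apply max_eq_right; linarith only [hx2M, hM0]
      have e8 : 4*δ*n*z = 0 := by rw [hz00]; ring
      have hK1term : K1*(R*L/4)*Real.exp (c*q)*X2 ≤ 28*bR*δ := by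
        have t2 : X2 ≤ Real.exp (c*(M/2)) := hX2exp _ hx2M
        have e7 : Real.exp (c*q) * Real.exp (c*(M/2)) = Real.exp (c*(q+M/2)) := by
          rw [← Real.exp_add]; ring_nf
        calc K1*(R*L/4)*Real.exp (c*q)*X2 ≤ K1*(R*L/4)*Real.exp (c*q)*Real.exp (c*(M/2)) :=
              mul_le_mul_of_nonneg_left t2 (by positivity)
        _ = K1*(R*L/4)*Real.exp (c*(q+M/2)) := by
            rw [mul_assoc, e7]
        _ ≤ 28*bR*δ := hPA3
      have hK2term : K2*X2*(U2*β - n*s2*γ) ≤ 28*bR*δ := hK2small hU2R' hx2M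
      linarith only [quadpart, hquad2, hK1B, hK1term, hK2term, h2b, e8, hbδ]
    · -- B2
      have hK2term := hK2neg hU2R' hx2M
      have habs1 : K1*(R*L/4)*Real.exp (c*q)*X2 ≤ K2*(γ*dd/4)*X2 := by
        have := mul_le_mul_of_nonneg_right hPA2 hX20.le
        have e : K2*γ*dd/4*X2 = K2*(γ*dd/4)*X2 := by ring
        linarith only [this, e]
      have habs2 : 4*δ*n*z ≤ K2*(γ*dd/4)*X2 := by
        rcases le_or_gt x2 M with hxM | hxM
        · have hz00 : z = 0 := by
            rw [hz]; apply max_eq_right; linarith only [hxM]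
          rw [hz00]
          have : 0 ≤ K2*(γ*dd/4)*X2 := by positivity
          linarith only [this]
        · have h4z : 4*z ≤ 4*bR := by linarith only [hzb]
          have hXM : Real.exp (c*M) ≤ X2 := hX2exp' _ hxM.le
          have h5 : K2*(γ*dd/4)*Real.exp (c*M) ≤ K2*(γ*dd/4)*X2 :=
            mul_le_mul_of_nonneg_left hXM (by positivity)
          have e10 : 4*δ*n*z = 4*z := by rw [hδ]; field_simp
          linarith only [h4z, hPA1, h5, e10]
      have hsum : 4*δ*n*z + K1*(R*L/4)*Real.exp (c*q)*X2 ≤ K2*(γ*dd/2)*X2 := by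
        have e : K2*(γ*dd/4)*X2 + K2*(γ*dd/4)*X2 = K2*(γ*dd/2)*X2 := by ring
        linarith only [habs1, habs2, e]
      linarith only [quadpart, hquad2, hK1B, hK2term, hsum, h2b, hbδ]


end KeyIneq

section Numerics

set_option maxHeartbeats 1000000 in
lemma numerics
    (n R L bR lamv q M Q θ β γ δ c dd K2 K1 : ℝ)
    (hn : R*R = n) (hR : 0 < R) (hL100 : 100 ≤ L) (hLR : L ≤ R) (hb2 : 2 ≤ bR)
    (hbL : 100*bR^2 ≤ L) (hlam0 : 0 ≤ lamv) (hlam1 : lamv ≤ 1)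
    (hq : q = lamv + L/R) (hM : M = L/(2*(bR-1)*R)) (hQ : Q = q + M)
    (hnL : Real.exp L = n)
    (hθ : θ = L/(8*R)) (hβ : β = Real.exp θ - 1) (hγ : γ = 1 - Real.exp (-θ))
    (hδ : δ = 1/n) (hc : c = θ*n) (hdd : dd = n*M/(2*(bR-1)))
    (hK2 : K2 = 28*bR*δ/(β*R*Real.exp (c*(M/2))))
    (hK1 : K1 = 2*K2*β*n/((L^2/32)*Real.exp (c*Q))) :
    (β ≤ 2*θ) ∧ (θ/2 ≤ γ) ∧ (0 < K2) ∧ (0 < K1) ∧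
    (n*(lamv*β - q*γ) ≤ -(L^2/32)) ∧ (β*R ≤ γ*dd/2) ∧
    (4*bR ≤ K2*(γ*dd/4)*Real.exp (c*M)) ∧
    (K1*(R*L/4)*Real.exp (c*q) ≤ K2*γ*dd/4) ∧
    (K1*(R*L/4)*Real.exp (c*(q+M/2)) ≤ 28*bR*δ) ∧
    (K2*β*R*Real.exp (c*(M/2)) = 28*bR*δ) ∧
    (K1*(L^2/32)*Real.exp (c*Q) = 2*K2*β*n) ∧ (0 < M) := by
  have hn0 : (0:ℝ) < n := hn ▸ mul_pos hR hR
  have hδ0 : (0:ℝ) < δ := by rw [hδ]; positivity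
  have hL0 : (0:ℝ) < L := by linarith only [hL100]
  have hθ0 : (0:ℝ) < θ := by rw [hθ]; positivity
  have hB1 : (1:ℝ) ≤ bR - 1 := by linarith only [hb2]
  have hB0 : (0:ℝ) < bR - 1 := by linarith only [hb2]
  have hbR0 : (0:ℝ) < bR := by linarith only [hb2]
  have hM0 : (0:ℝ) < M := by
    rw [hM]; exact div_pos hL0 (by positivity)
  have hdd0 : (0:ℝ) < dd := by
    rw [hdd]; exact div_pos (mul_pos hn0 hM0) (by linarith only [hb2])
  have hθhalf : θ ≤ 1/2 := by
    rw [hθ, div_le_iff₀ (by positivity)]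
    linarith only [hLR, hR]
  have hβ1 : θ ≤ β := by
    rw [hβ]; linarith only [Real.add_one_le_exp θ]
  have hβ2 : β ≤ 2*θ := hβ ▸ exp_beta_le hθ0.le hθhalf
  have hγ1 : θ/2 ≤ γ := hγ ▸ exp_gamma_ge hθ0.le (by linarith only [hθhalf])
  have hγ2 : γ ≤ θ := hγ ▸ exp_gamma_le θ
  have hβ0 : (0:ℝ) < β := by linarith only [hβ1, hθ0]
  have hγ0 : (0:ℝ) < γ := by linarith only [hγ1, hθ0]
  have hc0 : (0:ℝ) < c := by rw [hc]; exact mul_pos hθ0 hn0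
  have hn1 : (1:ℝ) ≤ n := by
    rw [← hnL]
    calc (1:ℝ) = Real.exp 0 := Real.exp_zero.symm
    _ ≤ Real.exp L := Real.exp_le_exp.mpr hL0.le
  set E := Real.exp (c*(M/2)) with hE
  have hE0 : (0:ℝ) < E := Real.exp_pos _
  have hEE : Real.exp (c*M) = E*E := by
    rw [hE, ← Real.exp_add]; congr 1; ring
  have hcM : c*M = L^2/(16*(bR-1)) := by
    rw [hc, hθ, hM, ← hn]; field_simp; ring
  have hcM2 : c*(M/2) = L^2/(32*(bR-1)) := by
    rw [hc, hθ, hM, ← hn]; field_simp; ring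
  have h64B : 64*(bR-1) ≤ L := by nlinarith only [hbL, hb2]
  have hcM4L : 4*L ≤ c*M := by
    rw [hcM, le_div_iff₀ (by positivity)]
    nlinarith only [h64B, hL0]
  have hcM2L : 2*L ≤ c*(M/2) := by
    rw [hcM2, le_div_iff₀ (by positivity)]
    nlinarith only [h64B, hL0]
  have hexp4 : Real.exp (4*L) = n^4 := by
    rw [show (4:ℝ)*L = L+(L+(L+L)) by ring, Real.exp_add, Real.exp_add, Real.exp_add, hnL]
    ring
  have hexp2 : Real.exp (2*L) = n^2 := by
    rw [show (2:ℝ)*L = L+L by ring, Real.exp_add, hnL]; ring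
  have hexpM : n^4 ≤ Real.exp (c*M) := by
    rw [← hexp4]; exact Real.exp_le_exp.mpr hcM4L
  have hexpM2 : n^2 ≤ E := by
    rw [hE, ← hexp2]; exact Real.exp_le_exp.mpr hcM2L
  have hE1 : (1:ℝ) ≤ E := by nlinarith only [hexpM2, hn1]
  have hK2eq : K2*β*R*E = 28*bR*δ := by
    rw [hK2, hE]; field_simp
  have hK20 : (0:ℝ) < K2 := by
    rw [hK2]
    exact div_pos (by positivity) (by positivity)
  have hK1eq : K1*(L^2/32)*Real.exp (c*Q) = 2*K2*β*n := by
    rw [hK1]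
    have h1 : (0:ℝ) < Real.exp (c*Q) := Real.exp_pos _
    field_simp
  have hK10 : (0:ℝ) < K1 := by
    rw [hK1]
    exact div_pos (by positivity) (by positivity)
  -- P4
  have hbg : β - γ = β*γ := by rw [hβ, hγ]; exact beta_sub_gamma θ
  have hP4 : n*(lamv*β - q*γ) ≤ -(L^2/32) := by
    have w1 : lamv*(β-γ) ≤ β-γ := by
      apply mul_le_of_le_one_left _ hlam1
      linarith only [hβ1, hγ2]
    have w2 : β*γ ≤ (2*θ)*θ := mul_le_mul hβ2 hγ2 hγ0.le (by positivity)
    have w3 : (θ/2)*(L/R) ≤ γ*(L/R) := mul_le_mul_of_nonneg_right hγ1 (by positivity)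
    have e2 : (2*θ)*θ = L^2/(32*n) := by rw [hθ, ← hn]; field_simp; ring
    have e3 : (θ/2)*(L/R) = L^2/(16*n) := by rw [hθ, ← hn]; field_simp; ring
    have e1 : lamv*β - q*γ = lamv*(β-γ) - γ*(L/R) + lamv*γ - lamv*γ := by rw [hq]; ring
    have t : lamv*β - q*γ ≤ -(L^2/(32*n)) := by
      have : lamv*β - q*γ = lamv*(β-γ) - γ*(L/R) := by rw [hq]; ring
      rw [this]
      calc lamv*(β-γ) - γ*(L/R) ≤ (β-γ) - (θ/2)*(L/R) := by linarith only [w1, w3]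
      _ ≤ (2*θ)*θ - (θ/2)*(L/R) := by linarith only [w2, hbg]
      _ = L^2/(32*n) - L^2/(16*n) := by rw [e2, e3]
      _ = -(L^2/(32*n)) := by ring
    have := mul_le_mul_of_nonneg_left t hn0.le
    have e4 : n*(-(L^2/(32*n))) = -(L^2/32) := by field_simp
    linarith only [this, e4]
  -- P5
  have e5 : dd = R*L/(4*(bR-1)^2) := by
    rw [hdd, hM, ← hn]; field_simp; ring
  have w0 : 100*(bR-1)^2 ≤ L := by nlinarith only [hbL, hb2]
  have hGDD : L ≤ γ*dd := by
    have g1 : (θ/2)*dd ≤ γ*dd := mul_le_mul_of_nonneg_right hγ1 hdd0.le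
    have e7 : (θ/2)*dd = L^2/(64*(bR-1)^2) := by
      rw [hθ, e5]; field_simp; ring
    have g2 : L ≤ L^2/(64*(bR-1)^2) := by
      rw [le_div_iff₀ (by positivity)]
      nlinarith only [w0, hL0]
    linarith only [g1, e7, g2]
  have e6 : 2*θ*R = L/4 := by rw [hθ]; field_simp; ring
  have hβRL4 : β*R ≤ L/4 := by
    have := mul_le_mul_of_nonneg_right hβ2 hR.le
    linarith only [this, e6]
  have hP5 : β*R ≤ γ*dd/2 := by
    linarith only [hβRL4, hGDD, hL100]
  -- PA1
  have hδE : (1:ℝ) ≤ δ*E := by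
    have g1 : δ*n^2 ≤ δ*E := mul_le_mul_of_nonneg_left hexpM2 hδ0.le
    have e8 : δ*n^2 = n := by rw [hδ]; field_simp
    linarith only [g1, e8, hn1]
  have hβγdd4 : β*R ≤ γ*dd/4 := by linarith only [hβRL4, hGDD, hL100]
  have hPA1 : 4*bR ≤ K2*(γ*dd/4)*Real.exp (c*M) := by
    have hpos : (0:ℝ) < β*R*E := by positivity
    rw [← mul_le_mul_iff_left₀ hpos]
    have eR : K2*(γ*dd/4)*Real.exp (c*M)*(β*R*E) = (γ*dd/4)*(E*E)*(K2*β*R*E) := by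
      rw [hEE]; ring
    rw [eR, hK2eq]
    -- goal : 4*bR*(β*R*E) ≤ (γ*dd/4)*(E*E)*(28*bR*δ)
    have t1 : 4*bR*(β*R*E) ≤ 4*bR*E*(γ*dd/4) := by
      have := mul_le_mul_of_nonneg_left hβγdd4 (by positivity : (0:ℝ) ≤ 4*bR*E)
      nlinarith only [this]
    have t2 : 4*bR*E*(γ*dd/4) ≤ (γ*dd/4)*(E*E)*(28*bR*δ) := by
      have hγdd0 : (0:ℝ) < γ*dd/4 := by positivity
      have base : 4*bR*E*1 ≤ 28*bR*E*(δ*E) := by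
        have u1 := mul_le_mul_of_nonneg_left hδE (by positivity : (0:ℝ) ≤ 28*bR*E)
        nlinarith only [u1, mul_pos hbR0 hE0]
      nlinarith only [base, hγdd0, hbR0, hE0, hδ0]
    linarith only [t1, t2]
  -- PA2
  have hexpQ : Real.exp (c*Q) = Real.exp (c*q) * Real.exp (c*M) := by
    rw [← Real.exp_add]; congr 1; rw [hQ]; ring
  have hPA2 : K1*(R*L/4)*Real.exp (c*q) ≤ K2*γ*dd/4 := by
    have hpos : (0:ℝ) < (L^2/32)*Real.exp (c*M) := by positivity
    rw [← mul_le_mul_iff_left₀ hpos]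
    have eL : K1*(R*L/4)*Real.exp (c*q)*((L^2/32)*Real.exp (c*M))
        = (K1*(L^2/32)*Real.exp (c*Q))*(R*L/4) := by
      rw [hexpQ]; ring
    rw [eL, hK1eq]
    -- goal : 2*K2*β*n*(R*L/4) ≤ K2*γ*dd/4*((L^2/32)*exp(c*M))
    have w1 : 2*K2*β*n*(R*L/4) ≤ K2*(n*L^2/8) := by
      have e9 : 2*θ*(n*(R*L/4)) = n*L^2/16 := by rw [hθ, ← hn]; field_simp; ring
      have g1 : β*(n*(R*L/4)) ≤ 2*θ*(n*(R*L/4)) :=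
        mul_le_mul_of_nonneg_right hβ2 (by positivity)
      have g2 := mul_le_mul_of_nonneg_left g1 hK20.le
      nlinarith only [g2, e9, hK20]
    have w2 : K2*(n*L^2/8) ≤ K2*γ*dd/4*((L^2/32)*Real.exp (c*M)) := by
      have g3 : (L/4)*((L^2/32)*(n^4)) ≤ (γ*dd/4)*((L^2/32)*Real.exp (c*M)) := by
        have p1 : L/4 ≤ γ*dd/4 := by linarith only [hGDD]
        have p2 : (L^2/32)*(n^4) ≤ (L^2/32)*Real.exp (c*M) :=
          mul_le_mul_of_nonneg_left hexpM (by positivity)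
        have p3 : (0:ℝ) ≤ L/4 := by positivity
        have p4 : (0:ℝ) ≤ (L^2/32)*(n^4) := by positivity
        exact mul_le_mul p1 p2 p4 (by positivity)
      have g4 : n*L^2/8 ≤ (L/4)*((L^2/32)*(n^4)) := by
        have u1 : 16*n ≤ L*n := by nlinarith only [hn1, hL100, hn0]
        have u2 : n ≤ n^4 := by
          have := pow_le_pow_right₀ hn1 (show 1 ≤ 4 by norm_num)
          simpa using this
        have u3 := mul_le_mul_of_nonneg_right u1 (sq_nonneg L)
        have u4 := mul_le_mul_of_nonneg_left u2 (by positivity : (0:ℝ) ≤ L^3)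
        nlinarith only [u3, u4]
      have g5 := mul_le_mul_of_nonneg_left (le_trans g4 g3) hK20.le
      have e10 : K2*(γ*dd/4*((L^2/32)*Real.exp (c*M))) = K2*γ*dd/4*((L^2/32)*Real.exp (c*M)) := by
        ring
      linarith only [g5, e10]
    linarith only [w1, w2]
  -- PA3
  have hexpQ2 : Real.exp (c*Q) = Real.exp (c*(q+M/2)) * E := by
    rw [hE, ← Real.exp_add]; congr 1; rw [hQ]; ring
  have hPA3 : K1*(R*L/4)*Real.exp (c*(q+M/2)) ≤ 28*bR*δ := by
    have hpos : (0:ℝ) < (L^2/32)*E := by positivity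
    rw [← mul_le_mul_iff_left₀ hpos]
    have eL : K1*(R*L/4)*Real.exp (c*(q+M/2))*((L^2/32)*E)
        = (K1*(L^2/32)*Real.exp (c*Q))*(R*L/4) := by
      rw [hexpQ2]; ring
    rw [eL, hK1eq]
    -- goal : 2*K2*β*n*(R*L/4) ≤ 28*bR*δ*((L^2/32)*E)
    have w1 : 2*K2*β*n*(R*L/4) ≤ K2*(n*L^2/8) := by
      have e9 : 2*θ*(n*(R*L/4)) = n*L^2/16 := by rw [hθ, ← hn]; field_simp; ring
      have g1 : β*(n*(R*L/4)) ≤ 2*θ*(n*(R*L/4)) :=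
        mul_le_mul_of_nonneg_right hβ2 (by positivity)
      have g2 := mul_le_mul_of_nonneg_left g1 hK20.le
      nlinarith only [g2, e9, hK20]
    have w2 : K2*(n*L^2/8) ≤ 28*bR*δ*((L^2/32)*E) := by
      -- 28 bR δ (L²/32) E = K2 β R E (L²/32) E  and  K2 n L²/8 ≤ K2 β R (L²/32) E²
      have e11 : 28*bR*δ*((L^2/32)*E) = K2*(β*R*(L^2/32)*(E*E)) := by
        rw [← hK2eq]; ring
      rw [e11]
      apply mul_le_mul_of_nonneg_left _ hK20.le
      -- n L²/8 ≤ β R (L²/32) E²   ⟸  16 n ≤ β R E²  and β R ≥ θ R = L/8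
      have g6 : θ*R ≤ β*R := mul_le_mul_of_nonneg_right hβ1 hR.le
      have e12 : θ*R = L/8 := by rw [hθ]; field_simp
      have g7 : n^2*n^2 ≤ E*E := by
        have := mul_le_mul hexpM2 hexpM2 (by positivity) hE0.le
        linarith only [this]
      -- βR(L²/32)E² ≥ (L/8)(L²/32)n⁴ ≥ nL²/8 ⟺ L n⁴/32·? : (L/8)(L²/32)n⁴ = L³n⁴/256 ≥ nL²/8 ⟺ 32 n ≤ L n⁴
      have g8 : n*L^2/8 ≤ (L/8)*(L^2/32)*(n^2*n^2) := by
        have u1 : 32*n ≤ L*n := by nlinarith only [hn1, hL100, hn0]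
        have u2 : n ≤ n^2*n^2 := by
          have h4 : n ≤ n^4 := by
            have := pow_le_pow_right₀ hn1 (show 1 ≤ 4 by norm_num)
            simpa using this
          nlinarith only [h4]
        have u3 := mul_le_mul_of_nonneg_right u1 (sq_nonneg L)
        have u4 := mul_le_mul_of_nonneg_left u2 (by positivity : (0:ℝ) ≤ L^3)
        nlinarith only [u3, u4]
      have g9 : (L/8)*(L^2/32)*(n^2*n^2) ≤ (β*R)*(L^2/32)*(E*E) := by
        have p1 : (0:ℝ) ≤ L^2/32 := by positivity
        have p2 : (0:ℝ) ≤ n^2*n^2 := by positivity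
        have p3 : L/8 ≤ β*R := by linarith only [g6, e12]
        have p4 : (0:ℝ) ≤ L/8 := by positivity
        have := mul_le_mul (mul_le_mul p3 (le_refl (L^2/32)) p1 (by linarith only [p3, p4])) g7 p2 (by positivity)
        linarith only [this]
      have e13 : β*R*(L^2/32)*(E*E) = (β*R)*(L^2/32)*(E*E) := by ring
      linarith only [g8, g9, e13]
    linarith only [w1, w2]
  exact ⟨hβ2, hγ1, hK20, hK10, hP4, hP5, hPA1, hPA2, hPA3, hK2eq, hK1eq, hM0⟩

end Numerics

section MoreAux

lemma sum_Icc_one_split {b : ℕ} (hb : 1 ≤ b) (v : ℕ → ℝ) :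
    ∑ i ∈ Finset.Icc 1 b, v i = v 1 + ∑ i ∈ Finset.Icc 2 b, v i := by
  have h : Finset.Icc 1 b = insert 1 (Finset.Icc 2 b) := by
    ext x
    simp only [Finset.mem_Icc, Finset.mem_insert]
    omega
  rw [h, Finset.sum_insert (by simp)]

lemma log_le_sqrt {x : ℝ} (hx : 256 ≤ x) : Real.log x ≤ Real.sqrt x := by
  have hx0 : (0:ℝ) < x := by linarith
  have hs0 : (0:ℝ) ≤ Real.sqrt x := Real.sqrt_nonneg x
  have h16 : (16:ℝ) ≤ Real.sqrt x := by
    have := Real.sqrt_le_sqrt hx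
    rwa [show Real.sqrt 256 = 16 by
      rw [show (256:ℝ) = 16^2 by norm_num, Real.sqrt_sq (by norm_num)]] at this
  have h4 : (4:ℝ) ≤ Real.sqrt (Real.sqrt x) := by
    have := Real.sqrt_le_sqrt h16
    rwa [show Real.sqrt 16 = 4 by
      rw [show (16:ℝ) = 4^2 by norm_num, Real.sqrt_sq (by norm_num)]] at this
  have hlog : Real.log x = 4 * Real.log (Real.sqrt (Real.sqrt x)) := by
    rw [Real.log_sqrt (Real.sqrt_nonneg x), Real.log_sqrt hx0.le]
    ring
  have hle : Real.log (Real.sqrt (Real.sqrt x)) ≤ Real.sqrt (Real.sqrt x) - 1 :=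
    Real.log_le_sub_one_of_pos (by linarith)
  have hmul : Real.sqrt (Real.sqrt x) * Real.sqrt (Real.sqrt x) = Real.sqrt x :=
    Real.mul_self_sqrt hs0
  nlinarith [hle, h4, hmul, hlog]

end MoreAux

end LBAux

theorem stmt0 (α : ℝ) (hα₁ : 0 < α) (hα₂ : α < 1 / 2) (b : ℕ → ℕ)
    (hb : ∀ N, 2 ≤ b N)
    (hbo : Tendsto (fun N : ℕ => (b N : ℝ) / Real.sqrt (Real.log N)) atTop (nhds 0)) :
    ∃ N₀ : ℕ, ∀ N : ℕ, N₀ ≤ N → ∀ alg : Algo N (b N), GoodAlgo N (b N) α alg →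
      ∀ μ : State N (b N) → ℝ, IsStationaryLB N (b N) α alg μ →
        (∑' s : State N (b N),
            μ s * max ((∑ i ∈ Finset.Icc 1 (b N), s.val i) - thr α N (b N)) 0)
          ≤ 29 * (b N : ℝ) / (Real.sqrt N * Real.log N) := by
  classical
  have ev1 : ∀ᶠ N : ℕ in atTop, 100 ≤ Real.log N :=
    (Real.tendsto_log_atTop.comp tendsto_natCast_atTop_atTop).eventually_ge_atTop 100
  have ev2 : ∀ᶠ N : ℕ in atTop, (256:ℝ) ≤ (N:ℝ) :=
    (tendsto_natCast_atTop_atTop).eventually_ge_atTop 256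
  have ev3 : ∀ᶠ N : ℕ in atTop, (b N : ℝ)/Real.sqrt (Real.log N) < 1/10 :=
    hbo.eventually_lt_const (by norm_num)
  obtain ⟨N₀, hN₀⟩ := eventually_atTop.mp ((ev1.and ev2).and ev3)
  refine ⟨N₀, ?_⟩
  intro N hN alg halg μ hμ
  obtain ⟨⟨hL100, hN256⟩, hb10⟩ := hN₀ N hN
  set n : ℝ := (N:ℝ) with hn_def
  set R : ℝ := Real.sqrt n with hR_def
  set L : ℝ := Real.log n with hL_def
  set bR : ℝ := ((b N : ℕ) : ℝ) with hbR_def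
  set lamv : ℝ := lam α N with hlamv_def
  set q : ℝ := lamv + L/R with hq_def
  set M : ℝ := L/(2*(bR-1)*R) with hM_def
  set Q : ℝ := q + M with hQ_def
  set θ : ℝ := L/(8*R) with hθ_def
  set β : ℝ := Real.exp θ - 1 with hβ_def
  set γ : ℝ := 1 - Real.exp (-θ) with hγ_def
  set δ : ℝ := 1/n with hδ_def
  set c : ℝ := θ*n with hc_def
  set dd : ℝ := n*M/(2*(bR-1)) with hdd_def
  set K2 : ℝ := 28*bR*δ/(β*R*Real.exp (c*(M/2))) with hK2_def
  set K1 : ℝ := 2*K2*β*n/((L^2/32)*Real.exp (c*Q)) with hK1_def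
  -- basic numeric facts
  have hn0 : (0:ℝ) < n := by rw [hn_def]; linarith
  have hn1 : (1:ℝ) ≤ n := by rw [hn_def]; linarith
  have hR0 : (0:ℝ) < R := Real.sqrt_pos.mpr hn0
  have hnRR : R*R = n := Real.mul_self_sqrt hn0.le
  have hL0 : (0:ℝ) < L := by linarith
  have hLR : L ≤ R := LBAux.log_le_sqrt hN256
  have hnL : Real.exp L = n := Real.exp_log hn0
  have hb2R : (2:ℝ) ≤ bR := by rw [hbR_def]; exact_mod_cast hb N
  have hbL : 100*bR^2 ≤ L := by
    have hsq : Real.sqrt L * Real.sqrt L = L := Real.mul_self_sqrt hL0.le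
    have hsL0 : (0:ℝ) < Real.sqrt L := Real.sqrt_pos.mpr hL0
    have t1 : bR * 10 < Real.sqrt L := by
      have := (div_lt_iff₀ hsL0).mp hb10
      rw [hbR_def]
      nlinarith only [this, hsL0]
    nlinarith only [t1, hsq, hb2R]
  have hlam0 : 0 ≤ lamv := by
    rw [hlamv_def, lam]
    have : (N:ℝ) ^ (-α) ≤ 1 :=
      Real.rpow_le_one_of_one_le_of_nonpos (by rw [← hn_def]; exact hn1) (by linarith)
    linarith
  have hlam1 : lamv ≤ 1 := by
    rw [hlamv_def, lam]
    have : (0:ℝ) ≤ (N:ℝ) ^ (-α) := Real.rpow_nonneg (by positivity) _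
    linarith
  have hB0 : (0:ℝ) < bR - 1 := by linarith
  -- numerics
  obtain ⟨Hβ2, Hγ1, HK20, HK10, HP4, HP5, HPA1, HPA2, HPA3, HK2eq, HK1eq, HM0⟩ :=
    LBAux.numerics n R L bR lamv q M Q θ β γ δ c dd K2 K1 hnRR hR0 hL100 hLR hb2R hbL
      hlam0 hlam1 hq_def hM_def hQ_def hnL hθ_def hβ_def hγ_def hδ_def hc_def hdd_def
      hK2_def hK1_def
  -- threshold identification
  have hQthr : thr α N (b N) = Q := by
    rw [thr, kcoef, hQ_def, hq_def, hM_def, ← hlamv_def, ← hL_def, ← hR_def, ← hbR_def]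
    field_simp
    ring
  -- finiteness
  have hNnat1 : 1 ≤ N := by
    by_contra h
    push_neg at h
    interval_cases N
    · rw [hn_def] at hn1; norm_num at hn1
  haveI hFin : Finite (State N (b N)) := LBAux.state_finite hNnat1
  -- the test function
  have hb1N : 1 ≤ b N := by have := hb N; omega
  -- key pointwise bound
  have hkey : ∀ s : State N (b N),
      gen N (b N) α alg (fun w => ((max ((∑ i ∈ Finset.Icc 1 (b N), w i) - Q) 0)^2
          + K1*Real.exp (c*(∑ i ∈ Finset.Icc 1 (b N), w i)))
          + K2*Real.exp (c*(∑ i ∈ Finset.Icc 2 (b N), w i))) s.val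
        ≤ -(2*δ*R*L) * (max ((s.val 1 + ∑ i ∈ Finset.Icc 2 (b N), s.val i) - Q) 0) + 58*bR*δ := by
    intro s
    have hzero : s.val (b N + 1) = 0 := s.prop.2.1 _ (by omega)
    have hsplit : ∑ i ∈ Finset.Icc 1 (b N), s.val i
        = s.val 1 + ∑ i ∈ Finset.Icc 2 (b N), s.val i := LBAux.sum_Icc_one_split hb1N s.val
    have hcomp := LBAux.gen_comp N (b N) α alg
      (fun x => (max (x - Q) 0)^2 + K1*Real.exp (c*x)) (fun x => K2*Real.exp (c*x)) s.val hb1N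
    rw [hcomp, hzero, alg.a_zero s]
    simp only [sub_zero]
    rw [hsplit]
    -- state facts
    have hs20 : 0 ≤ s.val 2 := LBAux.state_nonneg s 2
    have hs21 : s.val 2 ≤ s.val 1 := LBAux.state_le s (by omega) (by omega)
    have hs11 : s.val 1 ≤ 1 := LBAux.state_le_one s 1
    have hx20 : 0 ≤ ∑ i ∈ Finset.Icc 2 (b N), s.val i :=
      Finset.sum_nonneg (fun i _ => LBAux.state_nonneg s i)
    have hx2b : ∑ i ∈ Finset.Icc 2 (b N), s.val i ≤ (bR - 1) * s.val 2 := by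
      have h1 : ∀ i ∈ Finset.Icc 2 (b N), s.val i ≤ s.val 2 := by
        intro i hi
        rw [Finset.mem_Icc] at hi
        exact LBAux.state_le s hi.1 (by omega)
      have h2 := Finset.sum_le_card_nsmul _ _ _ h1
      rw [Nat.card_Icc] at h2
      have h3 : ((b N + 1 - 2 : ℕ) : ℝ) = bR - 1 := by
        rw [hbR_def, show b N + 1 - 2 = b N - 1 by omega,
          Nat.cast_sub (by omega : 1 ≤ b N)]
        norm_num
      rw [nsmul_eq_mul, h3] at h2
      exact h2
    -- algorithm facts
    have hAb0 : 0 ≤ alg.A (b N) s.val := alg.a_nonneg s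
    have hAb1 : alg.A (b N) s.val ≤ 1 := by
      have := LBAux.algo_chain alg s (b N) (le_refl _) 0 (by omega)
      rw [alg.a_zero s] at this
      exact this
    have hA11 : alg.A 1 s.val ≤ 1 := by
      have := LBAux.algo_chain alg s 1 (by omega) 0 (by omega)
      rw [alg.a_zero s] at this
      exact this
    have hA1b : alg.A (b N) s.val ≤ alg.A 1 s.val :=
      LBAux.algo_chain alg s (b N) (le_refl _) 1 (by omega)
    have hlamn0 : 0 ≤ lamv * n := mul_nonneg hlam0 hn0.le
    have hU10 : 0 ≤ lamv * n * (1 - alg.A (b N) s.val) :=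
      mul_nonneg hlamn0 (by linarith)
    have hU11 : lamv * n * (1 - alg.A (b N) s.val) ≤ lamv * n :=
      mul_le_of_le_one_right hlamn0 (by linarith)
    have hU21 : lamv * n * (alg.A 1 s.val - alg.A (b N) s.val) ≤ lamv * n :=
      mul_le_of_le_one_right hlamn0 (by linarith)
    have hU2R : s.val 1 ≤ Q → lamv * n * (alg.A 1 s.val - alg.A (b N) s.val) ≤ R := by
      intro hs1Q
      have hA1R : alg.A 1 s.val ≤ 1/R := by
        have := halg s (by rw [hQthr]; exact hs1Q)
        rw [← hR_def] at this
        exact this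
      have t1 : lamv * n * (alg.A 1 s.val - alg.A (b N) s.val)
          ≤ n * (alg.A 1 s.val - alg.A (b N) s.val) := by
        apply mul_le_mul_of_nonneg_right _ (by linarith)
        exact mul_le_of_le_one_left hn0.le hlam1
      have t2 : n * (alg.A 1 s.val - alg.A (b N) s.val) ≤ n * (1/R) := by
        apply mul_le_mul_of_nonneg_left _ hn0.le
        linarith
      have t3 : n * (1/R) = R := by
        rw [← hnRR]; field_simp
      linarith
    exact LBAux.key_ineq n R L bR lamv q M Q θ β γ δ c dd K2 K1
      (lamv * n * (1 - alg.A (b N) s.val))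
      (lamv * n * (alg.A 1 s.val - alg.A (b N) s.val))
      (s.val 1) (s.val 2) (∑ i ∈ Finset.Icc 2 (b N), s.val i)
      hnRR hR0 hL100 hLR hb2R hlam0 hlam1 hq_def hQ_def HM0
      hθ_def hβ_def hγ_def hδ_def hc_def hdd_def
      Hβ2 Hγ1 HK20 HK10 HP4 HP5 HPA1 HPA2 HPA3 HK2eq HK1eq
      hU10 hU11 hU21 hU2R hs20 hs21 hs11 hx20 hx2b
  -- tsum assembly
  have hgen0 := hμ.2.2 (fun w => ((max ((∑ i ∈ Finset.Icc 1 (b N), w i) - Q) 0)^2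
      + K1*Real.exp (c*(∑ i ∈ Finset.Icc 1 (b N), w i)))
      + K2*Real.exp (c*(∑ i ∈ Finset.Icc 2 (b N), w i)))
  have hμ0 : ∀ s, 0 ≤ μ s := fun s => (hμ.1 s).1
  have hsum1 : Summable (fun s : State N (b N) => μ s * gen N (b N) α alg
      (fun w => ((max ((∑ i ∈ Finset.Icc 1 (b N), w i) - Q) 0)^2
      + K1*Real.exp (c*(∑ i ∈ Finset.Icc 1 (b N), w i)))
      + K2*Real.exp (c*(∑ i ∈ Finset.Icc 2 (b N), w i))) s.val) := Summable.of_finite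
  have h2 : (0:ℝ) ≤ ∑' s : State N (b N),
      μ s * (-(2*δ*R*L) * (max ((s.val 1 + ∑ i ∈ Finset.Icc 2 (b N), s.val i) - Q) 0) + 58*bR*δ)
      - ∑' s : State N (b N), μ s * gen N (b N) α alg
      (fun w => ((max ((∑ i ∈ Finset.Icc 1 (b N), w i) - Q) 0)^2
      + K1*Real.exp (c*(∑ i ∈ Finset.Icc 1 (b N), w i)))
      + K2*Real.exp (c*(∑ i ∈ Finset.Icc 2 (b N), w i))) s.val := by
    rw [sub_nonneg]
    apply Summable.tsum_le_tsum _ hsum1 Summable.of_finite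
    intro s
    exact mul_le_mul_of_nonneg_left (hkey s) (hμ0 s)
  rw [hgen0, sub_zero] at h2
  -- rewrite the upper tsum
  have h3 : ∑' s : State N (b N),
      μ s * (-(2*δ*R*L) * (max ((s.val 1 + ∑ i ∈ Finset.Icc 2 (b N), s.val i) - Q) 0) + 58*bR*δ)
      = -(2*δ*R*L) * (∑' s : State N (b N),
          μ s * (max ((s.val 1 + ∑ i ∈ Finset.Icc 2 (b N), s.val i) - Q) 0))
        + 58*bR*δ := by
    have e : ∀ s : State N (b N),
        μ s * (-(2*δ*R*L) * (max ((s.val 1 + ∑ i ∈ Finset.Icc 2 (b N), s.val i) - Q) 0) + 58*bR*δ)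
        = -(2*δ*R*L) * (μ s * (max ((s.val 1 + ∑ i ∈ Finset.Icc 2 (b N), s.val i) - Q) 0))
          + (58*bR*δ) * μ s := by
      intro s; ring
    rw [tsum_congr e, Summable.tsum_add Summable.of_finite Summable.of_finite,
      tsum_mul_left, tsum_mul_left, hμ.2.1, mul_one]
  rw [h3] at h2
  -- identify the target tsum
  have h4 : (∑' s : State N (b N),
      μ s * max ((∑ i ∈ Finset.Icc 1 (b N), s.val i) - thr α N (b N)) 0)
      = ∑' s : State N (b N),
        μ s * (max ((s.val 1 + ∑ i ∈ Finset.Icc 2 (b N), s.val i) - Q) 0) := by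
    apply tsum_congr
    intro s
    rw [hQthr, LBAux.sum_Icc_one_split hb1N s.val]
  rw [h4]
  -- conclude
  have hδ0 : (0:ℝ) < δ := by rw [hδ_def]; positivity
  have hA0 : (0:ℝ) < 2*δ*R*L := by positivity
  have hfinal : (∑' s : State N (b N),
      μ s * (max ((s.val 1 + ∑ i ∈ Finset.Icc 2 (b N), s.val i) - Q) 0)) ≤ 58*bR*δ/(2*δ*R*L) := by
    rw [le_div_iff₀ hA0]
    nlinarith only [h2]
  have e5 : 58*bR*δ/(2*δ*R*L) = 29*bR/(R*L) := by
    rw [hδ_def]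
    field_simp
    ring
  rw [e5] at hfinal
  exact hfinal
end
end

section
/- For every integer N ≥ 2, every integer b ≥ 2, every real α ∈ (0, 1/2), every load balancing algorithm satisfying A₁(s) ≤ 1/√N for all s ∈ 𝒮 with s₁ ≤ λ + k·log N/√N, and every state s ∈ 𝒮 with V(s) ≥ log N/√N, the Lyapunov drift satisfies GV(s) ≤ −(1/(2(b−1)))·log N/√N + 1/√N. -/
open Filter

noncomputable section

/-- A stationary distribution of the chain. -/
def IsStationaryChain (N b : ℕ) (α : ℝ) (alg : Algo N b) (μ : State N b → ℝ) : Prop :=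
  (∀ s, 0 ≤ μ s ∧ μ s ≤ 1) ∧ (∑' s : State N b, μ s) = 1 ∧
    ∀ g : (ℕ → ℝ) → ℝ, (∑' s : State N b, μ s * gen N b α alg g s.val) = 0

/-- The Lyapunov function `V(s) = min { Σ_{i=2}^b s_i, λ + k log N/√N - s₁ }`. -/
def lyap (N b : ℕ) (α : ℝ) (s : ℕ → ℝ) : ℝ :=
  min (∑ i ∈ Finset.Icc 2 b, s i) (thr α N b - s 1)

lemma tele1 (u : ℕ → ℝ) : ∀ b : ℕ, 1 ≤ b →
    ∑ i ∈ Finset.Icc 2 b, (u (i - 1) - u i) = u 1 - u b := by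
  intro b
  induction b with
  | zero => omega
  | succ b ih =>
    intro _
    rcases Nat.eq_or_lt_of_le (show 1 ≤ b + 1 by omega) with h | h
    · have hb0 : b = 0 := by omega
      subst hb0
      simp
    · have hb1 : 1 ≤ b := by omega
      rw [Finset.sum_Icc_succ_top (by omega : 2 ≤ b + 1), ih hb1]
      simp only [Nat.add_sub_cancel]
      ring

lemma tele2 (u : ℕ → ℝ) : ∀ b : ℕ, 1 ≤ b →
    ∑ i ∈ Finset.Icc 2 b, (u i - u (i + 1)) = u 2 - u (b + 1) := by
  intro b
  induction b with
  | zero => omega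
  | succ b ih =>
    intro _
    rcases Nat.eq_or_lt_of_le (show 1 ≤ b + 1 by omega) with h | h
    · have hb0 : b = 0 := by omega
      subst hb0
      simp
    · have hb1 : 1 ≤ b := by omega
      rw [Finset.sum_Icc_succ_top (by omega : 2 ≤ b + 1), ih hb1]
      ring

set_option maxHeartbeats 1000000 in
theorem stmt4 (N b : ℕ) (hN : 2 ≤ N) (hb : 2 ≤ b) (α : ℝ) (hα₁ : 0 < α)
    (hα₂ : α < 1 / 2) (alg : Algo N b) (halg : GoodAlgo N b α alg)
    (s : State N b) (hV : Real.log N / Real.sqrt N ≤ lyap N b α s.val) :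
    gen N b α alg (lyap N b α) s.val
      ≤ -(1 / (2 * ((b : ℝ) - 1))) * (Real.log N / Real.sqrt N) + 1 / Real.sqrt N := by
  classical
  obtain ⟨h0, hz, hmono, -⟩ := s.2
  have hNR : (2 : ℝ) ≤ (N : ℝ) := by exact_mod_cast hN
  have hN0 : (0 : ℝ) < N := by linarith
  have hNe : (N : ℝ) ≠ 0 := ne_of_gt hN0
  have hNinv : (0 : ℝ) < 1 / (N : ℝ) := by positivity
  have hsq : 0 < Real.sqrt N := Real.sqrt_pos.2 hN0
  have hlog : 0 < Real.log N := Real.log_pos (by linarith)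
  set L : ℝ := Real.log N / Real.sqrt N with hLdef
  have hL : 0 < L := div_pos hlog hsq
  have hlam1 : lam α N ≤ 1 := by
    have : (0 : ℝ) < (N : ℝ) ^ (-α) := Real.rpow_pos_of_pos hN0 _
    unfold lam; linarith
  have hlam0 : 0 ≤ lam α N := by
    have : (N : ℝ) ^ (-α) < 1 :=
      Real.rpow_lt_one_of_one_lt_of_neg (by linarith) (by linarith)
    unfold lam; linarith
  set f : ℝ := ∑ i ∈ Finset.Icc 2 b, s.val i with hfdef
  set g : ℝ := thr α N b - s.val 1 with hgdef
  have hlyaps : lyap N b α s.val = min f g := rfl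
  have hf : L ≤ f := by rw [hlyaps] at hV; exact hV.trans (min_le_left _ _)
  have hg : L ≤ g := by rw [hlyaps] at hV; exact hV.trans (min_le_right _ _)
  -- antitonicity
  have hanti : ∀ j, j ≤ b + 1 → ∀ i, i ≤ j → s.val j ≤ s.val i := by
    intro j
    induction j with
    | zero =>
      intro _ i hi
      have : i = 0 := by omega
      simp [this]
    | succ j ih =>
      intro hj i hi
      rcases Nat.eq_or_lt_of_le hi with h | h
      · rw [h]
      · exact le_trans (hmono j (by omega)) (ih (by omega) i (by omega))
  have hb1 : (0 : ℝ) < (b : ℝ) - 1 := by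
    have : (2 : ℝ) ≤ (b : ℝ) := by exact_mod_cast hb
    linarith
  have hcard : ((Finset.Icc 2 b).card : ℝ) = (b : ℝ) - 1 := by
    rw [Nat.card_Icc]
    have : b + 1 - 2 = b - 1 := by omega
    rw [this, Nat.cast_sub (by omega)]
    simp
  have hfs2 : f ≤ ((b : ℝ) - 1) * s.val 2 := by
    calc f ≤ ∑ _i ∈ Finset.Icc 2 b, s.val 2 := by
            apply Finset.sum_le_sum
            intro i hi
            rw [Finset.mem_Icc] at hi
            exact hanti i (by omega) 2 hi.1
      _ = ((b : ℝ) - 1) * s.val 2 := by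
            rw [Finset.sum_const, nsmul_eq_mul, hcard]
  have hs2 : L / ((b : ℝ) - 1) ≤ s.val 2 := by
    rw [div_le_iff₀ hb1]
    nlinarith
  have hs2L : L ≤ ((b : ℝ) - 1) * s.val 2 := le_trans hf hfs2
  have hs2nn : 0 ≤ s.val 2 := by nlinarith
  -- algorithm facts
  have hA1top : alg.A 1 s.val ≤ 1 := by
    have h := alg.a_mono s 1 le_rfl (by omega)
    simpa [alg.a_zero s] using h
  have hAchain : ∀ j, 1 ≤ j → j ≤ b → alg.A j s.val ≤ alg.A 1 s.val := by
    intro j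
    induction j with
    | zero => omega
    | succ j ih =>
      intro _ hjb
      rcases Nat.eq_or_lt_of_le (show 1 ≤ j + 1 by omega) with h | h
      · rw [← h]
      · have h2 := alg.a_mono s (j + 1) (by omega) hjb
        simp only [Nat.add_sub_cancel] at h2
        exact le_trans h2 (ih (by omega) (by omega))
  have hAb0 : 0 ≤ alg.A b s.val := alg.a_nonneg s
  have hA1nn : 0 ≤ alg.A 1 s.val := le_trans hAb0 (hAchain b (by omega) le_rfl)
  have hs1thr : s.val 1 ≤ thr α N b := by
    have : L ≤ thr α N b - s.val 1 := hg
    linarith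
  have hA1 : alg.A 1 s.val ≤ 1 / Real.sqrt N := halg s hs1thr
  have hAmono : ∀ i ∈ Finset.Icc 2 b, 0 ≤ alg.A (i - 1) s.val - alg.A i s.val := by
    intro i hi
    rw [Finset.mem_Icc] at hi
    have := alg.a_mono s i (by omega) hi.2
    linarith
  -- lyapunov evaluations
  have E2 : ∀ i ∈ Finset.Icc 2 b, lyap N b α (s.val + evec N i) = min (f + 1 / (N : ℝ)) g := by
    intro i hi
    have hi1 : (1 : ℕ) ≠ i := by rw [Finset.mem_Icc] at hi; omega
    show min (∑ j ∈ Finset.Icc 2 b, (s.val + evec N i) j) (thr α N b - (s.val + evec N i) 1)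
        = min (f + 1 / (N : ℝ)) g
    simp only [Pi.add_apply]
    have h1 : ∑ j ∈ Finset.Icc 2 b, (s.val j + evec N i j) = f + 1 / (N : ℝ) := by
      rw [Finset.sum_add_distrib, ← hfdef]
      congr 1
      simp only [evec]
      rw [Finset.sum_ite_eq' (Finset.Icc 2 b) i (fun _ => 1 / (N : ℝ))]
      simp [hi]
    have h2 : s.val 1 + evec N i 1 = s.val 1 := by simp [evec, hi1]
    rw [h1, h2, ← hgdef]
  have E4 : ∀ i ∈ Finset.Icc 2 b, lyap N b α (s.val - evec N i) = min (f - 1 / (N : ℝ)) g := by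
    intro i hi
    have hi1 : (1 : ℕ) ≠ i := by rw [Finset.mem_Icc] at hi; omega
    show min (∑ j ∈ Finset.Icc 2 b, (s.val - evec N i) j) (thr α N b - (s.val - evec N i) 1)
        = min (f - 1 / (N : ℝ)) g
    simp only [Pi.sub_apply]
    have h1 : ∑ j ∈ Finset.Icc 2 b, (s.val j - evec N i j) = f - 1 / (N : ℝ) := by
      rw [Finset.sum_sub_distrib, ← hfdef]
      congr 1
      simp only [evec]
      rw [Finset.sum_ite_eq' (Finset.Icc 2 b) i (fun _ => 1 / (N : ℝ))]
      simp [hi]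
    have h2 : s.val 1 - evec N i 1 = s.val 1 := by simp [evec, hi1]
    rw [h1, h2, ← hgdef]
  have E1 : lyap N b α (s.val + evec N 1) = min f (g - 1 / (N : ℝ)) := by
    show min (∑ j ∈ Finset.Icc 2 b, (s.val + evec N 1) j) (thr α N b - (s.val + evec N 1) 1)
        = min f (g - 1 / (N : ℝ))
    simp only [Pi.add_apply]
    have h1 : ∑ j ∈ Finset.Icc 2 b, (s.val j + evec N 1 j) = f := by
      rw [Finset.sum_add_distrib, ← hfdef]
      simp only [evec]
      rw [Finset.sum_ite_eq' (Finset.Icc 2 b) 1 (fun _ => 1 / (N : ℝ))]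
      simp
    have h2 : s.val 1 + evec N 1 1 = s.val 1 + 1 / (N : ℝ) := by simp [evec]
    rw [h1, h2]
    congr 1
    rw [hgdef]
    ring
  have E3 : lyap N b α (s.val - evec N 1) = min f (g + 1 / (N : ℝ)) := by
    show min (∑ j ∈ Finset.Icc 2 b, (s.val - evec N 1) j) (thr α N b - (s.val - evec N 1) 1)
        = min f (g + 1 / (N : ℝ))
    simp only [Pi.sub_apply]
    have h1 : ∑ j ∈ Finset.Icc 2 b, (s.val j - evec N 1 j) = f := by
      rw [Finset.sum_sub_distrib, ← hfdef]
      simp only [evec]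
      rw [Finset.sum_ite_eq' (Finset.Icc 2 b) 1 (fun _ => 1 / (N : ℝ))]
      simp
    have h2 : s.val 1 - evec N 1 1 = s.val 1 - 1 / (N : ℝ) := by simp [evec]
    rw [h1, h2]
    congr 1
    rw [hgdef]
    ring
  -- split the generator sum
  have hsplit : Finset.Icc 1 b = insert 1 (Finset.Icc 2 b) := by
    ext x
    simp only [Finset.mem_Icc, Finset.mem_insert]
    omega
  have hnm : (1 : ℕ) ∉ Finset.Icc 2 b := by simp
  have hgen : gen N b α alg (lyap N b α) s.val =
      (lam α N * (N : ℝ) * (alg.A 0 s.val - alg.A 1 s.val) *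
          (lyap N b α (s.val + evec N 1) - lyap N b α s.val)
        + (N : ℝ) * (s.val 1 - s.val 2) *
          (lyap N b α (s.val - evec N 1) - lyap N b α s.val))
      + ∑ i ∈ Finset.Icc 2 b,
          (lam α N * (N : ℝ) * (alg.A (i - 1) s.val - alg.A i s.val) *
              (lyap N b α (s.val + evec N i) - lyap N b α s.val)
            + (N : ℝ) * (s.val i - s.val (i + 1)) *
              (lyap N b α (s.val - evec N i) - lyap N b α s.val)) := by
    rw [gen, hsplit, Finset.sum_insert hnm]
  rw [hgen, alg.a_zero s, E1, E3, hlyaps]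
  have hsval : s.val (b + 1) = 0 := hz (b + 1) (by omega)
  have hs12 : s.val 2 ≤ s.val 1 := hmono 1 (by omega)
  rcases le_or_gt f g with hfg | hgf
  · -- Case A : min = f
    have hmin : min f g = f := min_eq_left hfg
    rw [hmin]
    have hT1 : lam α N * (N : ℝ) * (1 - alg.A 1 s.val) * (min f (g - 1 / (N : ℝ)) - f)
        + (N : ℝ) * (s.val 1 - s.val 2) * (min f (g + 1 / (N : ℝ)) - f) ≤ 0 := by
      have e3 : min f (g + 1 / (N : ℝ)) = f := min_eq_left (by linarith)
      rw [e3]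
      have h1 : min f (g - 1 / (N : ℝ)) - f ≤ 0 := by
        have := min_le_left f (g - 1 / (N : ℝ)); linarith
      have hc : 0 ≤ lam α N * (N : ℝ) * (1 - alg.A 1 s.val) :=
        mul_nonneg (mul_nonneg hlam0 hN0.le) (by linarith)
      simp only [sub_self, mul_zero, add_zero]
      exact mul_nonpos_of_nonneg_of_nonpos hc h1
    have hTsum : ∑ i ∈ Finset.Icc 2 b,
        (lam α N * (N : ℝ) * (alg.A (i - 1) s.val - alg.A i s.val) *
            (lyap N b α (s.val + evec N i) - f)
          + (N : ℝ) * (s.val i - s.val (i + 1)) *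
            (lyap N b α (s.val - evec N i) - f))
        ≤ ∑ i ∈ Finset.Icc 2 b,
            (lam α N * (alg.A (i - 1) s.val - alg.A i s.val)
              - (s.val i - s.val (i + 1))) := by
      apply Finset.sum_le_sum
      intro i hi
      rw [E2 i hi, E4 i hi]
      have hi' := Finset.mem_Icc.mp hi
      have hD1 : min (f + 1 / (N : ℝ)) g - f ≤ 1 / (N : ℝ) := by
        have := min_le_left (f + 1 / (N : ℝ)) g; linarith
      have hD2 : min (f - 1 / (N : ℝ)) g = f - 1 / (N : ℝ) :=
        min_eq_left (by linarith)
      rw [hD2]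
      have hx := hAmono i hi
      have hy : 0 ≤ s.val i - s.val (i + 1) := by
        have := hmono i (by omega); linarith
      have hc : 0 ≤ lam α N * (N : ℝ) * (alg.A (i - 1) s.val - alg.A i s.val) := by
        positivity
      have key : lam α N * (N : ℝ) * (alg.A (i - 1) s.val - alg.A i s.val) *
          (min (f + 1 / (N : ℝ)) g - f)
          ≤ lam α N * (N : ℝ) * (alg.A (i - 1) s.val - alg.A i s.val) * (1 / (N : ℝ)) :=
        mul_le_mul_of_nonneg_left hD1 hc
      have hNN : (N : ℝ) * (1 / (N : ℝ)) = 1 := mul_one_div_cancel hNe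
      have e1 : lam α N * (N : ℝ) * (alg.A (i - 1) s.val - alg.A i s.val) * (1 / (N : ℝ))
          = lam α N * (alg.A (i - 1) s.val - alg.A i s.val) := by
        calc lam α N * (N : ℝ) * (alg.A (i - 1) s.val - alg.A i s.val) * (1 / (N : ℝ))
            = lam α N * (alg.A (i - 1) s.val - alg.A i s.val) * ((N : ℝ) * (1 / (N : ℝ))) := by
              ring
          _ = _ := by rw [hNN, mul_one]
      have e2 : (N : ℝ) * (s.val i - s.val (i + 1)) * (f - 1 / (N : ℝ) - f)
          = -(s.val i - s.val (i + 1)) := by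
        calc (N : ℝ) * (s.val i - s.val (i + 1)) * (f - 1 / (N : ℝ) - f)
            = -((s.val i - s.val (i + 1)) * ((N : ℝ) * (1 / (N : ℝ)))) := by ring
          _ = _ := by rw [hNN, mul_one]
      rw [e2]
      linarith [key, e1 ▸ key]
    have hT2 : ∑ i ∈ Finset.Icc 2 b,
        (lam α N * (alg.A (i - 1) s.val - alg.A i s.val) - (s.val i - s.val (i + 1)))
        = lam α N * (alg.A 1 s.val - alg.A b s.val) - s.val 2 := by
      rw [Finset.sum_sub_distrib]
      have t1 : ∑ i ∈ Finset.Icc 2 b, lam α N * (alg.A (i - 1) s.val - alg.A i s.val)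
          = lam α N * (alg.A 1 s.val - alg.A b s.val) := by
        rw [← Finset.mul_sum, tele1 (fun j => alg.A j s.val) b (by omega)]
      have t2 : ∑ i ∈ Finset.Icc 2 b, (s.val i - s.val (i + 1))
          = s.val 2 := by
        rw [tele2 (fun j => s.val j) b (by omega)]
        simp [hsval]
      rw [t1, t2]
    have hfin : lam α N * (alg.A 1 s.val - alg.A b s.val) - s.val 2
        ≤ -(1 / (2 * ((b : ℝ) - 1))) * L + 1 / Real.sqrt N := by
      have hAab : 0 ≤ alg.A 1 s.val - alg.A b s.val := by
        have := hAchain b (by omega) le_rfl; linarith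
      have h1 : lam α N * (alg.A 1 s.val - alg.A b s.val) ≤ 1 / Real.sqrt N := by
        have := mul_le_mul_of_nonneg_right hlam1 hAab
        linarith
      have hdd : 1 / (2 * ((b : ℝ) - 1)) ≤ 1 / ((b : ℝ) - 1) :=
        one_div_le_one_div_of_le hb1 (by linarith)
      have h2 : 1 / (2 * ((b : ℝ) - 1)) * L ≤ s.val 2 := by
        have := mul_le_mul_of_nonneg_right hdd hL.le
        have hone : 1 / ((b : ℝ) - 1) * L = L / ((b : ℝ) - 1) := by ring
        linarith [hs2]
      linarith
    calc _ ≤ 0 + ∑ i ∈ Finset.Icc 2 b,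
            (lam α N * (alg.A (i - 1) s.val - alg.A i s.val)
              - (s.val i - s.val (i + 1))) := add_le_add hT1 hTsum
      _ = lam α N * (alg.A 1 s.val - alg.A b s.val) - s.val 2 := by rw [zero_add, hT2]
      _ ≤ _ := hfin
  · -- Case B : min = g
    have hmin : min f g = g := min_eq_right hgf.le
    rw [hmin]
    have hT1 : lam α N * (N : ℝ) * (1 - alg.A 1 s.val) * (min f (g - 1 / (N : ℝ)) - g)
        + (N : ℝ) * (s.val 1 - s.val 2) * (min f (g + 1 / (N : ℝ)) - g)
        ≤ -(lam α N * (1 - alg.A 1 s.val)) + (s.val 1 - s.val 2) := by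
      have e1 : min f (g - 1 / (N : ℝ)) = g - 1 / (N : ℝ) :=
        min_eq_right (by linarith)
      rw [e1]
      have hD2 : min f (g + 1 / (N : ℝ)) - g ≤ 1 / (N : ℝ) := by
        have := min_le_right f (g + 1 / (N : ℝ)); linarith
      have hy : 0 ≤ s.val 1 - s.val 2 := by linarith
      have key : (N : ℝ) * (s.val 1 - s.val 2) * (min f (g + 1 / (N : ℝ)) - g)
          ≤ (N : ℝ) * (s.val 1 - s.val 2) * (1 / (N : ℝ)) :=
        mul_le_mul_of_nonneg_left hD2 (by positivity)
      have hNN : (N : ℝ) * (1 / (N : ℝ)) = 1 := mul_one_div_cancel hNe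
      have e2 : (N : ℝ) * (s.val 1 - s.val 2) * (1 / (N : ℝ)) = s.val 1 - s.val 2 := by
        calc (N : ℝ) * (s.val 1 - s.val 2) * (1 / (N : ℝ))
            = (s.val 1 - s.val 2) * ((N : ℝ) * (1 / (N : ℝ))) := by ring
          _ = _ := by rw [hNN, mul_one]
      have e3 : lam α N * (N : ℝ) * (1 - alg.A 1 s.val) * (g - 1 / (N : ℝ) - g)
          = -(lam α N * (1 - alg.A 1 s.val)) := by
        calc lam α N * (N : ℝ) * (1 - alg.A 1 s.val) * (g - 1 / (N : ℝ) - g)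
            = -(lam α N * (1 - alg.A 1 s.val) * ((N : ℝ) * (1 / (N : ℝ)))) := by ring
          _ = _ := by rw [hNN, mul_one]
      rw [e3]
      linarith [e2 ▸ key]
    have hTsum : ∑ i ∈ Finset.Icc 2 b,
        (lam α N * (N : ℝ) * (alg.A (i - 1) s.val - alg.A i s.val) *
            (lyap N b α (s.val + evec N i) - g)
          + (N : ℝ) * (s.val i - s.val (i + 1)) *
            (lyap N b α (s.val - evec N i) - g))
        ≤ ∑ i ∈ Finset.Icc 2 b, (0 : ℝ) := by
      apply Finset.sum_le_sum
      intro i hi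
      rw [E2 i hi, E4 i hi]
      have hi' := Finset.mem_Icc.mp hi
      have e1 : min (f + 1 / (N : ℝ)) g = g := min_eq_right (by linarith)
      rw [e1]
      have hD2 : min (f - 1 / (N : ℝ)) g - g ≤ 0 := by
        have := min_le_right (f - 1 / (N : ℝ)) g; linarith
      have hy : 0 ≤ (N : ℝ) * (s.val i - s.val (i + 1)) := by
        have := hmono i (by omega)
        have : 0 ≤ s.val i - s.val (i + 1) := by linarith
        positivity
      have := mul_nonpos_of_nonneg_of_nonpos hy hD2
      simp only [sub_self, mul_zero]
      linarith
    have hs1 : s.val 1 ≤ lam α N + 1 / (2 * ((b : ℝ) - 1)) * L := by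
      have hth : thr α N b = lam α N + (1 + 1 / (2 * ((b : ℝ) - 1))) * L := by
        rw [thr, kcoef, hLdef]
        ring
      have : L ≤ thr α N b - s.val 1 := hg
      rw [hth] at this
      linarith
    have hfin : -(lam α N * (1 - alg.A 1 s.val)) + (s.val 1 - s.val 2)
        ≤ -(1 / (2 * ((b : ℝ) - 1))) * L + 1 / Real.sqrt N := by
      have hA1' : lam α N * alg.A 1 s.val ≤ 1 / Real.sqrt N := by
        have := mul_le_mul_of_nonneg_right hlam1 hA1nn
        linarith
      have h2 : L / ((b : ℝ) - 1) ≤ s.val 2 := hs2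
      have h3 : -(1 / (2 * ((b : ℝ) - 1))) * L
          = 1 / (2 * ((b : ℝ) - 1)) * L - L / ((b : ℝ) - 1) := by
        field_simp
        ring
      nlinarith [hs1, h2, h3, hA1', hlam0, hlam1]
    calc _ ≤ (-(lam α N * (1 - alg.A 1 s.val)) + (s.val 1 - s.val 2))
            + ∑ i ∈ Finset.Icc 2 b, (0 : ℝ) := add_le_add hT1 hTsum
      _ = -(lam α N * (1 - alg.A 1 s.val)) + (s.val 1 - s.val 2) := by simp
      _ ≤ _ := hfin
end
end

section
/- Let b : ℕ → ℕ satisfy b(N) ≥ 2 for all N and b(N)/√(log N) → 0 as N → ∞. Then for all sufficiently large N, ( 1 + (1/(2(b(N)−1)))·(log N/√N) − 1/√N )^{ −( √N·log N/(8(b(N)−1)) + 1 ) } ≤ exp( −(log N)²/(32(b(N)−1)²) + log N/(16(b(N)−1)) ). -/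
open Filter

noncomputable section

lemma half_le_log_one_add {x : ℝ} (h0 : 0 ≤ x) (h1 : x ≤ 1) :
    x / 2 ≤ Real.log (1 + x) := by
  rw [Real.le_log_iff_exp_le (by linarith)]
  have h2 : 1 - x / 2 ≤ Real.exp (-(x / 2)) := by
    have := Real.add_one_le_exp (-(x / 2)); linarith
  have h3 : Real.exp (x / 2) * Real.exp (-(x / 2)) = 1 := by
    rw [← Real.exp_add]; ring_nf; exact Real.exp_zero
  nlinarith [Real.exp_pos (x / 2), Real.exp_pos (-(x / 2))]

theorem stmt7 (b : ℕ → ℕ) (hb : ∀ N, 2 ≤ b N)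
    (hbo : Tendsto (fun N : ℕ => (b N : ℝ) / Real.sqrt (Real.log N)) atTop (nhds 0)) :
    ∃ N₀ : ℕ, ∀ N : ℕ, N₀ ≤ N →
      (1 + (1 / (2 * ((b N : ℝ) - 1))) * (Real.log N / Real.sqrt N) - 1 / Real.sqrt N)
          ^ (-(Real.sqrt N * Real.log N / (8 * ((b N : ℝ) - 1)) + 1))
        ≤ Real.exp (-(Real.log N) ^ 2 / (32 * ((b N : ℝ) - 1) ^ 2)
            + Real.log N / (16 * ((b N : ℝ) - 1))) := by
  have hsmall : ∀ᶠ N : ℕ in atTop, (b N : ℝ) / Real.sqrt (Real.log N) ≤ 1 / 2 :=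
    hbo.eventually (eventually_le_nhds (by norm_num))
  have hbig : ∀ᶠ N : ℕ in atTop, 3 ≤ N := eventually_ge_atTop 3
  obtain ⟨N₀, hN₀⟩ := (hsmall.and hbig).exists_forall_of_atTop
  refine ⟨N₀, fun N hN => ?_⟩
  obtain ⟨hsm, h3N⟩ := hN₀ N hN
  set B : ℝ := (b N : ℝ) - 1 with hBdef
  have hB : 1 ≤ B := by
    have := hb N
    have : (2 : ℝ) ≤ (b N : ℝ) := by exact_mod_cast this
    simp [hBdef]; linarith
  set L : ℝ := Real.log N with hLdef
  set s : ℝ := Real.sqrt N with hsdef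
  have hNpos : (0 : ℝ) < N := by positivity
  have hN1 : (3 : ℝ) ≤ N := by exact_mod_cast h3N
  have hL1 : 1 ≤ L := by
    have h1 : Real.log 3 ≤ L := Real.log_le_log (by norm_num) hN1
    have h2 : (1 : ℝ) ≤ Real.log 3 := by
      rw [Real.le_log_iff_exp_le (by norm_num)]
      have := Real.exp_one_lt_d9
      linarith
    linarith
  have hs0 : 0 < s := Real.sqrt_pos.mpr hNpos
  -- L ≤ 2 s
  have hL2s : L ≤ 2 * s := by
    have h1 : Real.log s ≤ s - 1 := Real.log_le_sub_one_of_pos hs0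
    have h2 : Real.log s = L / 2 := by
      rw [hsdef, Real.log_sqrt (le_of_lt hNpos)]
    linarith
  -- 2*B ≤ L
  have h2BL : 2 * B ≤ L := by
    have hsl : 1 ≤ Real.sqrt L := by
      rw [show (1:ℝ) = Real.sqrt 1 by simp]
      exact Real.sqrt_le_sqrt hL1
    have hslpos : 0 < Real.sqrt L := by linarith
    have hbL : (b N : ℝ) ≤ Real.sqrt L / 2 := by
      rw [div_le_iff₀ hslpos] at hsm
      linarith
    have hsLL : Real.sqrt L ≤ L := by
      nlinarith [Real.sq_sqrt (le_of_lt (show (0:ℝ) < L by linarith))]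
    have : B ≤ (b N : ℝ) := by simp [hBdef]
    nlinarith
  set γ : ℝ := (1 / (2 * B)) * (L / s) - 1 / s with hγdef
  have hγ0 : 0 ≤ γ := by
    rw [hγdef, sub_nonneg, show 1 / (2 * B) * (L / s) = (L / (2 * B)) / s by ring]
    gcongr
    rw [le_div_iff₀ (by linarith)]; linarith
  have hγ1 : γ ≤ 1 := by
    rw [hγdef]
    have hLs : L / s ≤ 2 := by rw [div_le_iff₀ hs0]; linarith
    have h1 : 1 / (2 * B) * (L / s) ≤ 1 / 2 * 2 := by
      apply mul_le_mul ?_ hLs (by positivity) (by norm_num)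
      rw [div_le_div_iff₀ (by linarith) (by norm_num)]; linarith
    have h3 : 0 ≤ 1 / s := by positivity
    linarith
  have hlog : γ / 2 ≤ Real.log (1 + γ) := half_le_log_one_add hγ0 hγ1
  have hlog0 : 0 ≤ Real.log (1 + γ) := Real.log_nonneg (by linarith)
  set j : ℝ := s * L / (8 * B) with hjdef
  have hj0 : 0 ≤ j := by positivity
  have hbase : (0:ℝ) < 1 + γ := by linarith
  rw [show (1 + (1 / (2 * B)) * (L / s) - 1 / s) = 1 + γ by rw [hγdef]; ring]
  rw [Real.rpow_def_of_pos hbase, Real.exp_le_exp]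
  have hjγ : j * (γ / 2) = L ^ 2 / (32 * B ^ 2) - L / (16 * B) := by
    rw [hjdef, hγdef]
    have hB0 : B ≠ 0 := by intro h; rw [h] at hB; norm_num at hB
    have hs0' : s ≠ 0 := ne_of_gt hs0
    field_simp
    ring
  have h5 : j * (γ / 2) ≤ j * Real.log (1 + γ) := mul_le_mul_of_nonneg_left hlog hj0
  have h6 : j * Real.log (1 + γ) ≤ (j + 1) * Real.log (1 + γ) := by nlinarith
  rw [show Real.log (1 + γ) * -(j + 1) = -((j + 1) * Real.log (1 + γ)) by ring,
    show -L ^ 2 / (32 * B ^ 2) + L / (16 * B) = -(L ^ 2 / (32 * B ^ 2) - L / (16 * B)) by ring]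
  linarith
end
end

section
/- Let α ∈ (0, 1/2) be a real number and let b : ℕ → ℕ satisfy b(N) ≥ 2 for all N and b(N)/√(log N) → 0 as N → ∞. Then there exists N₀ such that for every integer N ≥ N₀, every load balancing algorithm on the N-server state space with parameter b = b(N) that satisfies A₁(s) ≤ 1/√N for every s ∈ 𝒮 with s₁ ≤ λ + k·log N/√N, and every stationary distribution π, the probability that all buffers are full satisfies Pr_π( Σ_{i=1}^{b} S_i = b ) ≤ 29/(√N · log N). -/
open Filter

noncomputable section

/-- A stationary distribution of the chain. -/
def IsStationaryDistr (N b : ℕ) (α : ℝ) (alg : Algo N b) (μ : State N b → ℝ) : Prop :=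
  (∀ s, 0 ≤ μ s ∧ μ s ≤ 1) ∧ (∑' s : State N b, μ s) = 1 ∧
    ∀ g : (ℕ → ℝ) → ℝ, (∑' s : State N b, μ s * gen N b α alg g s.val) = 0

namespace Stmt9Aux

/-- Sum of the coordinates. -/
def Msum (b : ℕ) (v : ℕ → ℝ) : ℝ := ∑ i ∈ Finset.Icc 1 b, v i

variable {N b : ℕ}

lemma state_anti (s : State N b) : ∀ i j : ℕ, i ≤ j → j ≤ b + 1 → s.val j ≤ s.val i := by
  intro i j hij
  induction j, hij using Nat.le_induction with
  | base => intro _; exact le_rfl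
  | succ j hj ih =>
    intro hjb
    exact le_trans (s.2.2.2.1 j (by omega)) (ih (by omega))

lemma state_nonneg (s : State N b) (i : ℕ) : 0 ≤ s.val i := by
  rcases le_or_gt i b with h | h
  · have h1 := state_anti s i (b + 1) (by omega) le_rfl
    have h0 : s.val (b + 1) = 0 := s.2.2.1 _ (by omega)
    linarith
  · rw [s.2.2.1 i h]

lemma state_le_one (s : State N b) (i : ℕ) : s.val i ≤ 1 := by
  rcases le_or_gt i (b + 1) with h | h
  · have h1 := state_anti s 0 i (Nat.zero_le _) h
    rw [s.2.1] at h1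
    exact h1
  · rw [s.2.2.1 i (by omega)]; norm_num

lemma algo_le (alg : Algo N b) (s : State N b) :
    ∀ i j : ℕ, i ≤ j → j ≤ b → alg.A j s.val ≤ alg.A i s.val := by
  intro i j hij
  induction j, hij using Nat.le_induction with
  | base => intro _; exact le_rfl
  | succ j hj ih =>
    intro hjb
    have h1 := alg.a_mono s (j + 1) (by omega) hjb
    simp only [Nat.add_sub_cancel] at h1
    exact le_trans h1 (ih (by omega))

lemma algo_b_mem (alg : Algo N b) (s : State N b) :
    0 ≤ alg.A b s.val ∧ alg.A b s.val ≤ 1 := by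
  refine ⟨alg.a_nonneg s, ?_⟩
  have := algo_le alg s 0 b (Nat.zero_le _) le_rfl
  rw [alg.a_zero s] at this
  exact this

lemma sum_Icc_tel (f : ℕ → ℝ) (b : ℕ) :
    ∑ i ∈ Finset.Icc 1 b, (f (i - 1) - f i) = f 0 - f b := by
  induction b with
  | zero => simp
  | succ n ih =>
    rw [Finset.sum_Icc_succ_top (by omega)]
    rw [ih]
    have : n + 1 - 1 = n := by omega
    rw [this]
    ring

lemma sum_Icc_tel' (f : ℕ → ℝ) (b : ℕ) :
    ∑ i ∈ Finset.Icc 1 b, (f i - f (i + 1)) = f 1 - f (b + 1) := by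
  induction b with
  | zero => simp
  | succ n ih =>
    rw [Finset.sum_Icc_succ_top (by omega), ih]
    ring

lemma evec_sum (hN : 0 < N) {i : ℕ} (hi : i ∈ Finset.Icc 1 b) :
    ∑ j ∈ Finset.Icc 1 b, evec N i j = 1 / (N : ℝ) := by
  unfold evec
  rw [Finset.sum_ite_eq' (Finset.Icc 1 b) i (fun _ => 1 / (N : ℝ))]
  simp [hi]

lemma msum_int (hN : 0 < N) (s : State N b) :
    ∃ m : ℤ, (N : ℝ) * Msum b s.val = (m : ℝ) := by
  have h := s.2.2.2.2
  choose f hf using h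
  refine ⟨∑ i ∈ Finset.Icc 1 b, f i, ?_⟩
  unfold Msum
  rw [Finset.mul_sum]
  push_cast
  exact Finset.sum_congr rfl fun i _ => hf i

lemma s1_ge (hb : 1 ≤ b) (s : State N b) :
    Msum b s.val - ((b : ℝ) - 1) ≤ s.val 1 := by
  have hmem : (1 : ℕ) ∈ Finset.Icc 1 b := by simp [hb]
  have hsplit : Msum b s.val = s.val 1 + ∑ i ∈ (Finset.Icc 1 b).erase 1, s.val i := by
    unfold Msum
    exact (Finset.add_sum_erase _ _ hmem).symm
  have hbound : ∑ i ∈ (Finset.Icc 1 b).erase 1, s.val i ≤ ((b : ℝ) - 1) := by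
    have h1 : ∑ i ∈ (Finset.Icc 1 b).erase 1, s.val i
        ≤ ∑ _i ∈ (Finset.Icc 1 b).erase 1, (1 : ℝ) :=
      Finset.sum_le_sum fun i _ => state_le_one s i
    have h2 : ((Finset.Icc 1 b).erase 1).card = b - 1 := by
      rw [Finset.Icc_erase_left]
      simp [Nat.card_Ioc]
    rw [Finset.sum_const, h2, nsmul_eq_mul, mul_one] at h1
    have : ((b - 1 : ℕ) : ℝ) = (b : ℝ) - 1 := by
      have : (1 : ℕ) ≤ b := hb
      push_cast [Nat.cast_sub this]
      ring
    rw [this] at h1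
    simpa using h1
  linarith

/-- Evaluation of the generator on a threshold test function of the total load. -/
lemma gen_eval (α : ℝ) (alg : Algo N b) (hN : 0 < N) (c : ℤ) (s : State N b) :
    gen N b α alg (fun v => if (c : ℝ) ≤ (N : ℝ) * Msum b v then 1 else 0) s.val
      = lam α N * (N : ℝ) * (1 - alg.A b s.val) *
          (if (N : ℝ) * Msum b s.val = (c : ℝ) - 1 then 1 else 0)
        - (N : ℝ) * s.val 1 *
          (if (N : ℝ) * Msum b s.val = (c : ℝ) then 1 else 0) := by
  obtain ⟨m, hm⟩ := msum_int hN s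
  have hNne : (N : ℝ) ≠ 0 := by positivity
  set g : (ℕ → ℝ) → ℝ := fun v => if (c : ℝ) ≤ (N : ℝ) * Msum b v then 1 else 0 with hg
  have hplus : ∀ i ∈ Finset.Icc 1 b, g (s.val + evec N i) =
      (if (c : ℝ) ≤ (m : ℝ) + 1 then (1:ℝ) else 0) := by
    intro i hi
    have h1 : Msum b (s.val + evec N i) = Msum b s.val + 1 / N := by
      unfold Msum
      simp only [Pi.add_apply]
      rw [Finset.sum_add_distrib, evec_sum hN hi]
    simp only [hg, h1]
    congr 1
    rw [mul_add, hm, mul_one_div_cancel hNne]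
  have hminus : ∀ i ∈ Finset.Icc 1 b, g (s.val - evec N i) =
      (if (c : ℝ) ≤ (m : ℝ) - 1 then (1:ℝ) else 0) := by
    intro i hi
    have h1 : Msum b (s.val - evec N i) = Msum b s.val - 1 / N := by
      unfold Msum
      simp only [Pi.sub_apply]
      rw [Finset.sum_sub_distrib, evec_sum hN hi]
    simp only [hg, h1]
    congr 1
    rw [mul_sub, hm, mul_one_div_cancel hNne]
  have hgs : g s.val = (if (c : ℝ) ≤ (m : ℝ) then (1:ℝ) else 0) := by
    simp only [hg, hm]
  set Dp : ℝ := (if (c : ℝ) ≤ (m : ℝ) + 1 then (1:ℝ) else 0) -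
      (if (c : ℝ) ≤ (m : ℝ) then (1:ℝ) else 0) with hDp
  set Dm : ℝ := (if (c : ℝ) ≤ (m : ℝ) - 1 then (1:ℝ) else 0) -
      (if (c : ℝ) ≤ (m : ℝ) then (1:ℝ) else 0) with hDm
  have hsum : gen N b α alg g s.val =
      (∑ i ∈ Finset.Icc 1 b, (alg.A (i - 1) s.val - alg.A i s.val)) * (lam α N * N * Dp)
      + (∑ i ∈ Finset.Icc 1 b, (s.val i - s.val (i + 1))) * ((N : ℝ) * Dm) := by
    unfold gen
    rw [Finset.sum_mul, Finset.sum_mul, ← Finset.sum_add_distrib]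
    refine Finset.sum_congr rfl fun i hi => ?_
    rw [hplus i hi, hminus i hi, hgs]
    ring
  rw [hsum, sum_Icc_tel (fun i => alg.A i s.val) b, sum_Icc_tel' (fun i => s.val i) b,
    alg.a_zero s, s.2.2.1 (b + 1) (by omega)]
  have hDpval : Dp = (if (N : ℝ) * Msum b s.val = (c : ℝ) - 1 then 1 else 0) := by
    rw [hDp, hm]
    have h1 : ((c : ℝ) ≤ (m : ℝ) + 1) ↔ (c ≤ m + 1) := by
      constructor <;> intro h <;> exact_mod_cast h
    have h2 : ((c : ℝ) ≤ (m : ℝ)) ↔ (c ≤ m) := by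
      constructor <;> intro h <;> exact_mod_cast h
    have h3 : ((m : ℝ) = (c : ℝ) - 1) ↔ (m = c - 1) := by
      constructor <;> intro h
      · exact_mod_cast (by linarith : (m : ℝ) = ((c : ℤ) : ℝ) - 1)
      · rw [h]; push_cast; ring
    rcases lt_trichotomy m (c - 1) with h | h | h
    · rw [if_neg (by rw [h1]; omega), if_neg (by rw [h2]; omega), if_neg (by rw [h3]; omega)]
      ring
    · rw [if_pos (by rw [h1]; omega), if_neg (by rw [h2]; omega), if_pos (by rw [h3]; omega)]
      ring
    · rw [if_pos (by rw [h1]; omega), if_pos (by rw [h2]; omega), if_neg (by rw [h3]; omega)]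
      ring
  have hDmval : Dm = -(if (N : ℝ) * Msum b s.val = (c : ℝ) then 1 else 0) := by
    rw [hDm, hm]
    have h1 : ((c : ℝ) ≤ (m : ℝ) - 1) ↔ (c ≤ m - 1) := by
      constructor <;> intro h
      · exact_mod_cast (by linarith : ((c : ℤ) : ℝ) ≤ ((m : ℤ) : ℝ) - 1)
      · have : ((c : ℤ) : ℝ) ≤ ((m - 1 : ℤ) : ℝ) := by exact_mod_cast h
        push_cast at this; linarith
    have h2 : ((c : ℝ) ≤ (m : ℝ)) ↔ (c ≤ m) := by
      constructor <;> intro h <;> exact_mod_cast h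
    have h3 : ((m : ℝ) = (c : ℝ)) ↔ (m = c) := by
      constructor <;> intro h <;> exact_mod_cast h
    rcases lt_trichotomy m c with h | h | h
    · rw [if_neg (by rw [h1]; omega), if_neg (by rw [h2]; omega), if_neg (by rw [h3]; omega)]
      ring
    · rw [if_neg (by rw [h1]; omega), if_pos (by rw [h2]; omega), if_pos (by rw [h3]; omega)]
      ring
    · rw [if_pos (by rw [h1]; omega), if_pos (by rw [h2]; omega), if_neg (by rw [h3]; omega)]
      ring
  rw [hDpval, hDmval]
  ring


/-- The stationary probability that the total load equals `b - j/N` (times nothing),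
encoded at the integer level. -/
def Wfun (N b : ℕ) (μ : State N b → ℝ) (j : ℕ) : ℝ :=
  ∑' s : State N b, if (N : ℝ) * Msum b s.val = (b : ℝ) * (N : ℝ) - (j : ℝ) then μ s else 0

lemma prod_le_fst (x y χ : ℝ) (hx : 0 ≤ x) (hy0 : 0 ≤ y) (hy1 : y ≤ 1)
    (hχ0 : 0 ≤ χ) (hχ1 : χ ≤ 1) : x * y * χ ≤ x := by
  have h1 := mul_le_of_le_one_right (mul_nonneg hx hy0) hχ1
  have h2 := mul_le_of_le_one_right hx hy1
  linarith

lemma balance (α : ℝ) (alg : Algo N b) (μ : State N b → ℝ)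
    (hstat : IsStationaryDistr N b α alg μ) (hN : 0 < N)
    (hlam0 : 0 ≤ lam α N) (c : ℤ) :
    (∑' s : State N b, μ s * (lam α N * (N : ℝ) * (1 - alg.A b s.val) *
        (if (N : ℝ) * Msum b s.val = (c : ℝ) - 1 then 1 else 0)))
      = ∑' s : State N b, μ s * ((N : ℝ) * s.val 1 *
        (if (N : ℝ) * Msum b s.val = (c : ℝ) then 1 else 0)) := by
  obtain ⟨hμb, hsum1, hgen⟩ := hstat
  have hμ0 : ∀ s, 0 ≤ μ s := fun s => (hμb s).1
  have hμsum : Summable μ := by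
    by_contra h
    rw [tsum_eq_zero_of_not_summable h] at hsum1
    norm_num at hsum1
  set F : State N b → ℝ := fun s => μ s * (lam α N * (N : ℝ) * (1 - alg.A b s.val) *
      (if (N : ℝ) * Msum b s.val = (c : ℝ) - 1 then 1 else 0)) with hF
  set G : State N b → ℝ := fun s => μ s * ((N : ℝ) * s.val 1 *
      (if (N : ℝ) * Msum b s.val = (c : ℝ) then 1 else 0)) with hG
  have hNpos : (0 : ℝ) < N := by exact_mod_cast hN
  have hFb : ∀ s, 0 ≤ F s ∧ F s ≤ lam α N * (N : ℝ) * μ s := by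
    intro s
    obtain ⟨hA0, hA1⟩ := algo_b_mem alg s
    constructor
    · apply mul_nonneg (hμ0 s)
      apply mul_nonneg (mul_nonneg (mul_nonneg hlam0 hNpos.le) (by linarith))
      split <;> norm_num
    · rw [hF]
      rcases le_or_gt (μ s) 0 with h | h
      · have h0 : μ s = 0 := le_antisymm h (hμ0 s)
        simp [h0]
      · have h1 : (lam α N * (N : ℝ) * (1 - alg.A b s.val) *
            (if (N : ℝ) * Msum b s.val = (c : ℝ) - 1 then (1:ℝ) else 0)) ≤ lam α N * N := by
          have h2 : (if (N : ℝ) * Msum b s.val = (c : ℝ) - 1 then (1:ℝ) else 0) ≤ 1 := by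
            split <;> norm_num
          have h3 : (0:ℝ) ≤ if (N : ℝ) * Msum b s.val = (c : ℝ) - 1 then (1:ℝ) else 0 := by
            split <;> norm_num
          exact prod_le_fst _ _ _ (mul_nonneg hlam0 hNpos.le) (by linarith) (by linarith) h3 h2
        calc μ s * _ ≤ μ s * (lam α N * N) := by
              exact mul_le_mul_of_nonneg_left h1 (hμ0 s)
          _ = lam α N * (N : ℝ) * μ s := by ring
  have hGb : ∀ s, 0 ≤ G s ∧ G s ≤ (N : ℝ) * μ s := by
    intro s
    have hs1 : 0 ≤ s.val 1 := state_nonneg s 1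
    have hs1' : s.val 1 ≤ 1 := state_le_one s 1
    constructor
    · apply mul_nonneg (hμ0 s)
      apply mul_nonneg (mul_nonneg hNpos.le hs1)
      split <;> norm_num
    · rw [hG]
      have h1 : ((N : ℝ) * s.val 1 *
          (if (N : ℝ) * Msum b s.val = (c : ℝ) then (1:ℝ) else 0)) ≤ (N : ℝ) := by
        have h2 : (if (N : ℝ) * Msum b s.val = (c : ℝ) then (1:ℝ) else 0) ≤ 1 := by
          split <;> norm_num
        have h3 : (0:ℝ) ≤ if (N : ℝ) * Msum b s.val = (c : ℝ) then (1:ℝ) else 0 := by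
          split <;> norm_num
        exact prod_le_fst _ _ _ hNpos.le hs1 hs1' h3 h2
      calc μ s * _ ≤ μ s * (N : ℝ) := mul_le_mul_of_nonneg_left h1 (hμ0 s)
        _ = (N : ℝ) * μ s := by ring
  have hFsum : Summable F :=
    Summable.of_nonneg_of_le (fun s => (hFb s).1) (fun s => (hFb s).2)
      (hμsum.mul_left (lam α N * (N : ℝ)))
  have hGsum : Summable G :=
    Summable.of_nonneg_of_le (fun s => (hGb s).1) (fun s => (hGb s).2)
      (hμsum.mul_left ((N : ℝ)))
  have hkey := hgen (fun v => if (c : ℝ) ≤ (N : ℝ) * Msum b v then 1 else 0)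
  have hpt : ∀ s : State N b,
      μ s * gen N b α alg (fun v => if (c : ℝ) ≤ (N : ℝ) * Msum b v then 1 else 0) s.val
        = F s - G s := by
    intro s
    rw [gen_eval α alg hN c s, hF, hG]
    ring
  rw [tsum_congr hpt, Summable.tsum_sub hFsum hGsum] at hkey
  linarith

lemma wfun_nonneg (μ : State N b → ℝ) (hμ0 : ∀ s, 0 ≤ μ s) (j : ℕ) : 0 ≤ Wfun N b μ j := by
  apply tsum_nonneg
  intro s
  split
  · exact hμ0 s
  · exact le_rfl

lemma if_summable (μ : State N b → ℝ) (hμ0 : ∀ s, 0 ≤ μ s) (hμsum : Summable μ) (j : ℕ) :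
    Summable (fun s : State N b =>
      if (N : ℝ) * Msum b s.val = (b : ℝ) * (N : ℝ) - (j : ℝ) then μ s else 0) := by
  apply Summable.of_nonneg_of_le _ _ hμsum
  · intro s
    split
    · exact hμ0 s
    · exact le_rfl
  · intro s
    split
    · exact le_rfl
    · exact hμ0 s

lemma wfun_le_one (μ : State N b → ℝ) (hμ0 : ∀ s, 0 ≤ μ s) (hμsum : Summable μ)
    (hsum1 : (∑' s : State N b, μ s) = 1) (j : ℕ) : Wfun N b μ j ≤ 1 := by
  rw [← hsum1]
  apply Summable.tsum_le_tsum _ (if_summable μ hμ0 hμsum j) hμsum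
  intro s
  split
  · exact le_rfl
  · exact hμ0 s

lemma step_ineq (α : ℝ) (alg : Algo N b) (μ : State N b → ℝ)
    (hstat : IsStationaryDistr N b α alg μ) (hN : 0 < N) (hb : 1 ≤ b)
    (hlam0 : 0 ≤ lam α N) (j : ℕ) :
    ((N : ℝ) - (j : ℝ)) * Wfun N b μ j ≤ lam α N * (N : ℝ) * Wfun N b μ (j + 1) := by
  have hμ0 : ∀ s, 0 ≤ μ s := fun s => (hstat.1 s).1
  have hμsum : Summable μ := by
    have h1 := hstat.2.1
    by_contra h
    rw [tsum_eq_zero_of_not_summable h] at h1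
    norm_num at h1
  have hNpos : (0 : ℝ) < N := by exact_mod_cast hN
  have hbal := balance α alg μ hstat hN hlam0 ((b : ℤ) * N - j)
  have hc : (((b : ℤ) * N - j : ℤ) : ℝ) = (b : ℝ) * (N : ℝ) - (j : ℝ) := by push_cast; ring
  rw [hc] at hbal
  have hc1 : (b : ℝ) * (N : ℝ) - (j : ℝ) - 1 = (b : ℝ) * (N : ℝ) - ((j : ℝ) + 1) := by ring
  rw [hc1] at hbal
  -- lower bound the right side of hbal
  have hlow : ((N : ℝ) - (j : ℝ)) * Wfun N b μ j
      ≤ ∑' s : State N b, μ s * ((N : ℝ) * s.val 1 *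
          (if (N : ℝ) * Msum b s.val = (b : ℝ) * (N : ℝ) - (j : ℝ) then 1 else 0)) := by
    rw [Wfun, ← tsum_mul_left]
    apply Summable.tsum_le_tsum _ ((if_summable μ hμ0 hμsum j).mul_left _) _
    · intro s
      by_cases hcond : (N : ℝ) * Msum b s.val = (b : ℝ) * (N : ℝ) - (j : ℝ)
      · rw [if_pos hcond, if_pos hcond, mul_one]
        have h1 : Msum b s.val - ((b : ℝ) - 1) ≤ s.val 1 := s1_ge hb s
        have h2 : (N : ℝ) * (Msum b s.val - ((b : ℝ) - 1)) ≤ (N : ℝ) * s.val 1 :=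
          mul_le_mul_of_nonneg_left h1 hNpos.le
        have h3 : (N : ℝ) - (j : ℝ) ≤ (N : ℝ) * s.val 1 := by
          have h4 : (N : ℝ) * (Msum b s.val - ((b : ℝ) - 1)) = (N : ℝ) - (j : ℝ) := by
            rw [mul_sub, hcond]; ring
          linarith
        calc ((N : ℝ) - (j : ℝ)) * μ s ≤ ((N : ℝ) * s.val 1) * μ s :=
              mul_le_mul_of_nonneg_right h3 (hμ0 s)
          _ = μ s * ((N : ℝ) * s.val 1) := by ring
      · rw [if_neg hcond, if_neg hcond]
        simp
    · apply Summable.of_nonneg_of_le _ _ (hμsum.mul_left ((N : ℝ)))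
      · intro s
        apply mul_nonneg (hμ0 s)
        apply mul_nonneg (mul_nonneg hNpos.le (state_nonneg s 1))
        split <;> norm_num
      · intro s
        have hs1' : s.val 1 ≤ 1 := state_le_one s 1
        have hs1 : 0 ≤ s.val 1 := state_nonneg s 1
        have h2 : ((N : ℝ) * s.val 1 *
            (if (N : ℝ) * Msum b s.val = (b : ℝ) * (N : ℝ) - (j : ℝ) then (1:ℝ) else 0)) ≤ N := by
          have h3 : (if (N : ℝ) * Msum b s.val = (b : ℝ) * (N : ℝ) - (j : ℝ) then (1:ℝ) else 0) ≤ 1 := by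
            split <;> norm_num
          have h4 : (0:ℝ) ≤ if (N : ℝ) * Msum b s.val = (b : ℝ) * (N : ℝ) - (j : ℝ) then (1:ℝ) else 0 := by
            split <;> norm_num
          exact prod_le_fst _ _ _ hNpos.le hs1 hs1' h4 h3
        calc μ s * _ ≤ μ s * (N : ℝ) := mul_le_mul_of_nonneg_left h2 (hμ0 s)
          _ = (N : ℝ) * μ s := by ring
  -- upper bound the left side of hbal
  have hup : (∑' s : State N b, μ s * (lam α N * (N : ℝ) * (1 - alg.A b s.val) *
        (if (N : ℝ) * Msum b s.val = (b : ℝ) * (N : ℝ) - ((j : ℝ) + 1) then 1 else 0)))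
      ≤ lam α N * (N : ℝ) * Wfun N b μ (j + 1) := by
    have hcast : ((j + 1 : ℕ) : ℝ) = (j : ℝ) + 1 := by push_cast; ring
    rw [Wfun, ← tsum_mul_left]
    apply Summable.tsum_le_tsum _ _ (((if_summable μ hμ0 hμsum (j+1))).mul_left _)
    · intro s
      rw [hcast]
      obtain ⟨hA0, hA1⟩ := algo_b_mem alg s
      by_cases hcond : (N : ℝ) * Msum b s.val = (b : ℝ) * (N : ℝ) - ((j : ℝ) + 1)
      · rw [if_pos hcond, if_pos hcond, mul_one]
        have h1 : lam α N * (N : ℝ) * (1 - alg.A b s.val) ≤ lam α N * (N : ℝ) :=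
          mul_le_of_le_one_right (mul_nonneg hlam0 hNpos.le) (by linarith)
        calc μ s * (lam α N * (N : ℝ) * (1 - alg.A b s.val))
            = (lam α N * (N : ℝ) * (1 - alg.A b s.val)) * μ s := by ring
          _ ≤ (lam α N * (N : ℝ)) * μ s := mul_le_mul_of_nonneg_right h1 (hμ0 s)
      · rw [if_neg hcond, if_neg hcond]
        simp
    · apply Summable.of_nonneg_of_le _ _ (hμsum.mul_left (lam α N * (N : ℝ)))
      · intro s
        obtain ⟨hA0, hA1⟩ := algo_b_mem alg s
        apply mul_nonneg (hμ0 s)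
        apply mul_nonneg (mul_nonneg (mul_nonneg hlam0 hNpos.le) (by linarith))
        split <;> norm_num
      · intro s
        obtain ⟨hA0, hA1⟩ := algo_b_mem alg s
        have h2 : (lam α N * (N : ℝ) * (1 - alg.A b s.val) *
            (if (N : ℝ) * Msum b s.val = (b : ℝ) * (N : ℝ) - ((j : ℝ) + 1) then (1:ℝ) else 0))
            ≤ lam α N * (N : ℝ) := by
          have h3 : (if (N : ℝ) * Msum b s.val = (b : ℝ) * (N : ℝ) - ((j : ℝ) + 1) then (1:ℝ) else 0) ≤ 1 := by
            split <;> norm_num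
          have h4 : (0:ℝ) ≤ if (N : ℝ) * Msum b s.val = (b : ℝ) * (N : ℝ) - ((j : ℝ) + 1) then (1:ℝ) else 0 := by
            split <;> norm_num
          exact prod_le_fst _ _ _ (mul_nonneg hlam0 hNpos.le) (by linarith) (by linarith) h4 h3
        calc μ s * _ ≤ μ s * (lam α N * (N : ℝ)) := mul_le_mul_of_nonneg_left h2 (hμ0 s)
          _ = lam α N * (N : ℝ) * μ s := by ring
  linarith

lemma chain_ineq (W : ℕ → ℝ) (r : ℝ) (hr : 0 ≤ r) (hW : ∀ j, 0 ≤ W j) (J : ℕ)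
    (h : ∀ j, j < J → W j ≤ r * W (j + 1)) : W 0 ≤ r ^ J * W J := by
  induction J with
  | zero => simp
  | succ n ih =>
    have h1 : W 0 ≤ r ^ n * W n := ih fun j hj => h j (by omega)
    calc W 0 ≤ r ^ n * W n := h1
      _ ≤ r ^ n * (r * W (n + 1)) := by
          exact mul_le_mul_of_nonneg_left (h n (by omega)) (pow_nonneg hr n)
      _ = r ^ (n + 1) * W (n + 1) := by ring

end Stmt9Aux


set_option maxHeartbeats 1000000 in
open Stmt9Aux in
theorem stmt9 (α : ℝ) (hα₁ : 0 < α) (hα₂ : α < 1 / 2) (b : ℕ → ℕ)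
    (hb : ∀ N, 2 ≤ b N)
    (hbo : Tendsto (fun N : ℕ => (b N : ℝ) / Real.sqrt (Real.log N)) atTop (nhds 0)) :
    ∃ N₀ : ℕ, ∀ N : ℕ, N₀ ≤ N → ∀ alg : Algo N (b N), GoodAlgo N (b N) α alg →
      ∀ μ : State N (b N) → ℝ, IsStationaryDistr N (b N) α alg μ →
        (∑' s : State N (b N),
            if (∑ i ∈ Finset.Icc 1 (b N), s.val i) = (b N : ℝ) then μ s else 0)
          ≤ 29 / (Real.sqrt N * Real.log N) := by
  have hδ : (0:ℝ) < 1 - 2*α := by linarith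
  set m : ℕ := ⌈2 / (1-2*α)⌉₊ with hm
  have hgt : Tendsto (fun x : ℝ => x ^ m * Real.exp (-x)) atTop (nhds 0) :=
    Real.tendsto_pow_mul_exp_neg_atTop_nhds_zero m
  have hcomp : Tendsto (fun N : ℕ => ((N:ℝ) ^ (1-2*α)) / 4) atTop atTop :=
    ((tendsto_rpow_atTop hδ).comp tendsto_natCast_atTop_atTop).atTop_div_const (by norm_num)
  have hg0 : Tendsto (fun N : ℕ => (4:ℝ)^m *
      ((((N:ℝ) ^ (1-2*α)) / 4) ^ m * Real.exp (-(((N:ℝ) ^ (1-2*α)) / 4)))) atTop (nhds 0) := by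
    have h := (hgt.comp hcomp).const_mul ((4:ℝ)^m)
    simpa using h
  have hfg : ∀ᶠ N : ℕ in atTop,
      Real.sqrt N * Real.log N * Real.exp (-(((N:ℝ) ^ (1-2*α)) / 4))
      ≤ (4:ℝ)^m * ((((N:ℝ) ^ (1-2*α)) / 4) ^ m * Real.exp (-(((N:ℝ) ^ (1-2*α)) / 4))) := by
    filter_upwards [eventually_ge_atTop 1] with N hN1
    have hN1R : (1:ℝ) ≤ N := by exact_mod_cast hN1
    have hsq : Real.sqrt N ≤ (N:ℝ) := by
      nlinarith [Real.sq_sqrt (show (0:ℝ) ≤ N by linarith), Real.sqrt_nonneg (N:ℝ)]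
    have hlog : Real.log N ≤ (N:ℝ) := by
      have h := Real.log_le_sub_one_of_pos (show (0:ℝ) < N by linarith)
      linarith
    have hlog0 : 0 ≤ Real.log N := Real.log_nonneg hN1R
    have hexp : 0 < Real.exp (-(((N:ℝ) ^ (1-2*α)) / 4)) := Real.exp_pos _
    have key : Real.sqrt N * Real.log N ≤ (4:ℝ)^m * (((N:ℝ) ^ (1-2*α)) / 4) ^ m := by
      have h1 : Real.sqrt N * Real.log N ≤ (N:ℝ)^((2:ℝ)) := by
        have h0 : (N:ℝ)^((2:ℝ)) = (N:ℝ)*(N:ℝ) := by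
          rw [show (2:ℝ) = ((2:ℕ):ℝ) by norm_num, Real.rpow_natCast]; ring
        rw [h0]
        nlinarith [Real.sqrt_nonneg (N:ℝ)]
      have h2 : (N:ℝ)^((2:ℝ)) ≤ (N:ℝ)^((1-2*α) * m) := by
        apply Real.rpow_le_rpow_of_exponent_le hN1R
        have hceil : 2/(1-2*α) ≤ (m:ℝ) := Nat.le_ceil _
        calc (2:ℝ) = (1-2*α) * (2/(1-2*α)) := by field_simp
          _ ≤ (1-2*α) * m := by nlinarith
      have h3 : (N:ℝ)^((1-2*α) * (m:ℝ)) = (((N:ℝ)^(1-2*α)))^m := by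
        rw [Real.rpow_mul (by positivity), Real.rpow_natCast]
      have h4 : (4:ℝ)^m * (((N:ℝ) ^ (1-2*α)) / 4) ^ m = (((N:ℝ)^(1-2*α)))^m := by
        rw [← mul_pow]
        congr 1
        ring
      rw [h4, ← h3]
      calc Real.sqrt N * Real.log N ≤ (N:ℝ)^((2:ℝ)) := h1
        _ ≤ (N:ℝ)^((1-2*α) * (m:ℝ)) := h2
    calc Real.sqrt N * Real.log N * Real.exp (-(((N:ℝ) ^ (1-2*α)) / 4))
        ≤ ((4:ℝ)^m * (((N:ℝ) ^ (1-2*α)) / 4) ^ m) * Real.exp (-(((N:ℝ) ^ (1-2*α)) / 4)) :=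
          mul_le_mul_of_nonneg_right key hexp.le
      _ = (4:ℝ)^m * ((((N:ℝ) ^ (1-2*α)) / 4) ^ m * Real.exp (-(((N:ℝ) ^ (1-2*α)) / 4))) := by
          ring
  have hften : Tendsto (fun N : ℕ =>
      Real.sqrt N * Real.log N * Real.exp (-(((N:ℝ) ^ (1-2*α)) / 4))) atTop (nhds 0) := by
    apply squeeze_zero' _ hfg hg0
    filter_upwards with N
    positivity
  have hE2' : ∀ᶠ N : ℕ in atTop,
      Real.sqrt N * Real.log N * Real.exp (-(((N:ℝ) ^ (1-2*α)) / 4)) ≤ 29 / Real.exp 1 :=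
    hften.eventually_le_const (by positivity)
  obtain ⟨N₀, hN₀⟩ := eventually_atTop.mp ((eventually_ge_atTop 3).and hE2')
  refine ⟨N₀, ?_⟩
  intro N hNN alg _halg μ hstat
  obtain ⟨hN3, hE2⟩ := hN₀ N hNN
  have hb2 : 2 ≤ (b N) := hb N
  have hN0 : 0 < N := by omega
  have hNpos : (0:ℝ) < N := by exact_mod_cast hN0
  have hNne : (N:ℝ) ≠ 0 := ne_of_gt hNpos
  have hN1R : (1:ℝ) < N := by exact_mod_cast (show 1 < N by omega)
  set a : ℝ := (N:ℝ) ^ (-α) with ha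
  have ha0 : 0 < a := Real.rpow_pos_of_pos hNpos _
  have ha1 : a < 1 := Real.rpow_lt_one_of_one_lt_of_neg hN1R (by linarith)
  have hlameq : lam α N = 1 - a := rfl
  have hlam0 : 0 ≤ lam α N := by rw [hlameq]; linarith
  have hμ0 : ∀ s, 0 ≤ μ s := fun s => (hstat.1 s).1
  have hsum1 : (∑' s : State N (b N), μ s) = 1 := hstat.2.1
  have hμsum : Summable μ := by
    by_contra h
    rw [tsum_eq_zero_of_not_summable h] at hsum1
    norm_num at hsum1
  set J : ℕ := ⌊(N:ℝ)^(1-α)/2⌋₊ with hJ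
  have hJle : (J:ℝ) ≤ (N:ℝ)^(1-α)/2 := Nat.floor_le (by positivity)
  have hJge : (N:ℝ)^(1-α)/2 - 1 < (J:ℝ) := Nat.sub_one_lt_floor _
  have hrp : (N:ℝ)^(1-α) = (N:ℝ) * a := by
    rw [show (1-α : ℝ) = 1 + (-α) by ring, Real.rpow_add hNpos, Real.rpow_one, ha]
  have hrp2 : a * (N:ℝ)^(1-α) = (N:ℝ)^(1-2*α) := by
    rw [ha, ← Real.rpow_add hNpos]
    congr 1
    ring
  set W : ℕ → ℝ := Wfun N (b N) μ with hW
  have hW0 : ∀ j, 0 ≤ W j := fun j => wfun_nonneg μ hμ0 j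
  have hW1 : ∀ j, W j ≤ 1 := fun j => wfun_le_one μ hμ0 hμsum hsum1 j
  set r : ℝ := (1 - a) / (1 - a/2) with hr
  have hden : (0:ℝ) < 1 - a/2 := by linarith
  have hr0 : 0 ≤ r := by
    apply div_nonneg _ hden.le
    linarith
  have hra : r ≤ 1 - a/2 := by
    rw [hr, div_le_iff₀ hden]
    nlinarith
  have hstep : ∀ j, j < J → W j ≤ r * W (j + 1) := by
    intro j hj
    have hs := step_ineq α alg μ hstat hN0 (by omega : 1 ≤ (b N)) hlam0 j
    rw [← hW, hlameq] at hs
    have hjJ : (j:ℝ) < (J:ℝ) := by exact_mod_cast hj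
    have hNj : (N:ℝ) * (1 - a/2) ≤ (N:ℝ) - (j:ℝ) := by
      have h1 : (j:ℝ) ≤ (N:ℝ) * a / 2 := by
        have h1' := hJle
        rw [hrp] at h1'
        linarith
      nlinarith
    have h1 : (N:ℝ) * (1 - a/2) * W j ≤ (1 - a) * (N:ℝ) * W (j + 1) :=
      le_trans (mul_le_mul_of_nonneg_right hNj (hW0 j)) hs
    have h2 : (1 - a/2) * W j ≤ (1 - a) * W (j + 1) := by
      have h3 : (N:ℝ) * ((1 - a/2) * W j) ≤ (N:ℝ) * ((1 - a) * W (j + 1)) := by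
        calc (N:ℝ) * ((1 - a/2) * W j) = (N:ℝ) * (1 - a/2) * W j := by ring
          _ ≤ (1 - a) * (N:ℝ) * W (j + 1) := h1
          _ = (N:ℝ) * ((1 - a) * W (j + 1)) := by ring
      exact le_of_mul_le_mul_left h3 hNpos
    rw [hr, div_mul_eq_mul_div, le_div_iff₀ hden]
    linarith
  have hchain : W 0 ≤ r ^ J * W J := chain_ineq W r hr0 hW0 J hstep
  have hWJ : r ^ J * W J ≤ r ^ J := by
    have := hW1 J
    nlinarith [pow_nonneg hr0 J]
  have hpow1 : r ^ J ≤ (1 - a/2) ^ J := pow_le_pow_left₀ hr0 hra J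
  have hpow2 : (1 - a/2) ^ J ≤ Real.exp (-(a/2)) ^ J := by
    have hh := Real.add_one_le_exp (-(a/2))
    gcongr
    linarith
  have hpow3 : Real.exp (-(a/2)) ^ J = Real.exp ((J:ℝ) * (-(a/2))) := by
    rw [← Real.exp_nat_mul]
  have hexpineq : Real.exp ((J:ℝ) * (-(a/2))) ≤
      Real.exp 1 * Real.exp (-(((N:ℝ) ^ (1-2*α)) / 4)) := by
    rw [← Real.exp_add]
    apply Real.exp_le_exp.mpr
    have h1 : ((N:ℝ)^(1-α)/2 - 1) * (a/2) ≤ (J:ℝ) * (a/2) := by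
      nlinarith
    have h2 : ((N:ℝ)^(1-α)/2) * (a/2) = (N:ℝ)^(1-2*α) / 4 := by
      rw [← hrp2]
      ring
    nlinarith
  have hfinal : W 0 ≤ 29 / (Real.sqrt N * Real.log N) := by
    have hWbound : W 0 ≤ Real.exp 1 * Real.exp (-(((N:ℝ) ^ (1-2*α)) / 4)) := by
      calc W 0 ≤ r ^ J * W J := hchain
        _ ≤ r ^ J := hWJ
        _ ≤ (1 - a/2) ^ J := hpow1
        _ ≤ Real.exp (-(a/2)) ^ J := hpow2
        _ = Real.exp ((J:ℝ) * (-(a/2))) := hpow3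
        _ ≤ Real.exp 1 * Real.exp (-(((N:ℝ) ^ (1-2*α)) / 4)) := hexpineq
    have hlogpos : 0 < Real.log N := Real.log_pos (by exact_mod_cast (show 1 < N by omega))
    have hsqpos : 0 < Real.sqrt N := Real.sqrt_pos.mpr hNpos
    have hprodpos : 0 < Real.sqrt N * Real.log N := mul_pos hsqpos hlogpos
    have hexp1 : (0:ℝ) < Real.exp 1 := Real.exp_pos 1
    have hE2'' : Real.exp 1 * Real.exp (-(((N:ℝ) ^ (1-2*α)) / 4))
        ≤ 29 / (Real.sqrt N * Real.log N) := by
      rw [le_div_iff₀ hprodpos]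
      have h5 : Real.sqrt N * Real.log N * Real.exp (-(((N:ℝ) ^ (1-2*α)) / 4)) * Real.exp 1
          ≤ (29 / Real.exp 1) * Real.exp 1 := mul_le_mul_of_nonneg_right hE2 hexp1.le
      rw [div_mul_cancel₀ _ (ne_of_gt hexp1)] at h5
      calc Real.exp 1 * Real.exp (-(((N:ℝ) ^ (1-2*α)) / 4)) * (Real.sqrt N * Real.log N)
          = Real.sqrt N * Real.log N * Real.exp (-(((N:ℝ) ^ (1-2*α)) / 4)) * Real.exp 1 := by
            ring
        _ ≤ 29 := h5
    linarith
  have hgoal : (∑' s : State N (b N),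
      if (∑ i ∈ Finset.Icc 1 (b N), s.val i) = ((b N) : ℝ) then μ s else 0) = W 0 := by
    rw [hW, Wfun]
    apply tsum_congr
    intro s
    congr 1
    simp only [Nat.cast_zero, sub_zero, eq_iff_iff]
    constructor
    · intro h
      rw [Msum, h]
      ring
    · intro h
      have h2 : (N:ℝ) * Msum (b N) s.val = (N:ℝ) * ((b N):ℝ) := by rw [h]; ring
      have h3 : Msum (b N) s.val = ((b N):ℝ) := mul_left_cancel₀ hNne h2
      rw [← h3, Msum]
  rw [hgoal]
  exact hfinal
end
end
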